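/- arXiv:1901.06673 — 7 statements merged into one kernel-verified Lean document; each statement's English description precedes it below -/
import Mathlib

section
/- Let n ≥ 2, λ ∈ (0,1), and let b_1 < b_2 < ⋯ < b_n be real numbers. Let E be a nonempty subset of ℝ satisfying E = ⋃_{i=1}^{n} (λ·E + b_i). If the strong separation condition fails, i.e. there exist indices i ≠ j with (λ·E + b_i) ∩ (λ·E + b_j) ≠ ∅, then E contains a three-term arithmetic progression: there exist x, y, z ∈ E with x ≠ y and x + z = 2y. -/
/-- If the strong separation condition fails for a self-similar set
`E = ⋃ i, (λ • E + b i)` with strictly increasing translations, then `E` contains a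
three-term arithmetic progression. -/
theorem ap_of_ssc_fails (n : ℕ) (hn : 2 ≤ n) (lam : ℝ) (hlam : lam ∈ Set.Ioo (0:ℝ) 1)
    (b : Fin n → ℝ) (hb : StrictMono b)
    (E : Set ℝ) (hE : E.Nonempty)
    (hself : E = ⋃ i : Fin n, (fun x => lam * x + b i) '' E)
    (hfail : ∃ i j : Fin n, i ≠ j ∧
      (((fun x => lam * x + b i) '' E) ∩ ((fun x => lam * x + b j) '' E)).Nonempty) :
    ∃ x ∈ E, ∃ y ∈ E, ∃ z ∈ E, x ≠ y ∧ x + z = 2 * y := by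
  have hmem : ∀ (k : Fin n) (x : ℝ), x ∈ E → lam * x + b k ∈ E := by
    intro k x hx
    rw [hself]
    exact Set.mem_iUnion.2 ⟨k, ⟨x, hx, rfl⟩⟩
  obtain ⟨i, j, hij, u, hui, huj⟩ := hfail
  obtain ⟨x, hx, hxu⟩ := hui
  obtain ⟨y, hy, hyu⟩ := huj
  refine ⟨lam * x + b j, hmem j x hx, lam * x + b i, hmem i x hx,
    lam * y + b i, hmem i y hy, ?_, ?_⟩
  · intro h
    exact hij ((hb.injective (by linarith)).symm)
  · simp only at hxu hyu
    linarith
end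

section
/- Let n ≥ 2 be an integer, λ ∈ (0, 1/n), α = (1 − nλ)/(n − 1), and let E_λ^n = { (λ+α)·∑_{t=1}^{∞} a_t λ^t : a_t ∈ {0,1,…,n−1} for all t ≥ 1 }. If E_λ^n contains an arithmetic progression of length n + 1 (i.e. there exist a ∈ ℝ and δ > 0 with a + iδ ∈ E_λ^n for all 0 ≤ i ≤ n), then λ ≥ 1/(2n − 1). -/
/-- The homogeneous self-similar set `E_λ^n` with digits `{0, …, n-1}` and
`α = (1 - nλ)/(n - 1)`, consisting of all points `(λ+α)·∑_{t≥1} a_t λ^t`. -/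
def selfSimilarSet (n : ℕ) (lam : ℝ) : Set ℝ :=
  {x : ℝ | ∃ a : ℕ → ℕ, (∀ t, a t < n) ∧
    x = (lam + (1 - n * lam) / (n - 1)) * ∑' t : ℕ, (a t : ℝ) * lam ^ (t + 1)}

lemma ssc_summable_aux {n : ℕ} {lam : ℝ} (hl0 : 0 < lam) (hl1 : lam < 1)
    (a : ℕ → ℕ) (ha : ∀ t, a t < n) :
    Summable (fun t : ℕ => (a t : ℝ) * lam ^ (t + 1)) := by
  have hg : Summable (fun t : ℕ => ((n : ℝ) - 1) * lam ^ (t + 1)) := by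
    have h : (fun t : ℕ => ((n : ℝ) - 1) * lam ^ (t + 1))
        = fun t : ℕ => (((n : ℝ) - 1) * lam) * lam ^ t := by
      funext t; ring
    rw [h]
    exact (summable_geometric_of_lt_one hl0.le hl1).mul_left _
  apply Summable.of_nonneg_of_le (fun t => by positivity) (fun t => ?_) hg
  have hle : (a t : ℝ) ≤ (n : ℝ) - 1 := by
    have := ha t
    have h' : (a t : ℝ) + 1 ≤ (n : ℝ) := by exact_mod_cast Nat.succ_le_of_lt this
    linarith
  exact mul_le_mul_of_nonneg_right hle (by positivity)

lemma ssc_zero_mem (n : ℕ) (lam : ℝ) (hn : 0 < n) : (0 : ℝ) ∈ selfSimilarSet n lam :=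
  ⟨fun _ => 0, fun _ => hn, by simp⟩

lemma ssc_mem_bounds {n : ℕ} (hn : 2 ≤ n) {lam : ℝ} (hl0 : 0 < lam) (hl1 : lam < 1)
    {x : ℝ} (hx : x ∈ selfSimilarSet n lam) : 0 ≤ x ∧ x ≤ lam := by
  obtain ⟨a, ha, rfl⟩ := hx
  have hn1 : (2 : ℝ) ≤ (n : ℝ) := by exact_mod_cast hn
  have hne : (n : ℝ) - 1 ≠ 0 := by linarith
  have hne2 : 1 - lam ≠ 0 := by linarith
  have hc : lam + (1 - (n : ℝ) * lam) / ((n : ℝ) - 1) = (1 - lam) / ((n : ℝ) - 1) := by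
    field_simp
    ring
  have hf := ssc_summable_aux hl0 hl1 a ha
  have hg : Summable (fun t : ℕ => ((n : ℝ) - 1) * lam ^ (t + 1)) := by
    have h : (fun t : ℕ => ((n : ℝ) - 1) * lam ^ (t + 1))
        = fun t : ℕ => (((n : ℝ) - 1) * lam) * lam ^ t := by
      funext t; ring
    rw [h]
    exact (summable_geometric_of_lt_one hl0.le hl1).mul_left _
  have hS0 : 0 ≤ ∑' t : ℕ, (a t : ℝ) * lam ^ (t + 1) :=
    tsum_nonneg (fun t => by positivity)
  have hcpos : 0 < (1 - lam) / ((n : ℝ) - 1) := by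
    apply div_pos <;> linarith
  constructor
  · rw [hc]
    exact mul_nonneg hcpos.le hS0
  · have hS : ∑' t : ℕ, (a t : ℝ) * lam ^ (t + 1)
        ≤ (((n : ℝ) - 1) * lam) * (1 - lam)⁻¹ := by
      have h1 : ∑' t : ℕ, (a t : ℝ) * lam ^ (t + 1)
          ≤ ∑' t : ℕ, ((n : ℝ) - 1) * lam ^ (t + 1) := by
        apply Summable.tsum_le_tsum _ hf hg
        intro t
        have hle : (a t : ℝ) ≤ (n : ℝ) - 1 := by
          have h' : (a t : ℝ) + 1 ≤ (n : ℝ) := by exact_mod_cast Nat.succ_le_of_lt (ha t)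
          linarith
        exact mul_le_mul_of_nonneg_right hle (by positivity)
      have h2 : ∑' t : ℕ, ((n : ℝ) - 1) * lam ^ (t + 1)
          = (((n : ℝ) - 1) * lam) * (1 - lam)⁻¹ := by
        have h : (fun t : ℕ => ((n : ℝ) - 1) * lam ^ (t + 1))
            = fun t : ℕ => (((n : ℝ) - 1) * lam) * lam ^ t := by
          funext t; ring
        rw [h, tsum_mul_left, tsum_geometric_of_lt_one hl0.le hl1]
      linarith
    rw [hc]
    calc (1 - lam) / ((n : ℝ) - 1) * ∑' t : ℕ, (a t : ℝ) * lam ^ (t + 1)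
        ≤ (1 - lam) / ((n : ℝ) - 1) * ((((n : ℝ) - 1) * lam) * (1 - lam)⁻¹) :=
          mul_le_mul_of_nonneg_left hS hcpos.le
      _ = lam := by field_simp

lemma ssc_decomp {n : ℕ} (hn : 2 ≤ n) {lam : ℝ} (hl0 : 0 < lam) (hl1 : lam < 1)
    {x : ℝ} (hx : x ∈ selfSimilarSet n lam) :
    ∃ j y, j < n ∧ y ∈ selfSimilarSet n lam ∧
      x = (lam + (1 - (n : ℝ) * lam) / ((n : ℝ) - 1)) * lam * j + lam * y := by
  obtain ⟨a, ha, rfl⟩ := hx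
  have hf := ssc_summable_aux hl0 hl1 a ha
  refine ⟨a 0, (lam + (1 - (n : ℝ) * lam) / ((n : ℝ) - 1)) * ∑' t : ℕ, (a (t + 1) : ℝ) * lam ^ (t + 1),
    ha 0, ⟨fun t => a (t + 1), fun t => ha (t + 1), rfl⟩, ?_⟩
  have h0 : ∑' t : ℕ, (a t : ℝ) * lam ^ (t + 1)
      = (a 0 : ℝ) * lam ^ (0 + 1) + ∑' t : ℕ, (a (t + 1) : ℝ) * lam ^ (t + 1 + 1) :=
    Summable.tsum_eq_zero_add hf
  have h1 : ∑' t : ℕ, (a (t + 1) : ℝ) * lam ^ (t + 1 + 1)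
      = lam * ∑' t : ℕ, (a (t + 1) : ℝ) * lam ^ (t + 1) := by
    rw [← tsum_mul_left]
    congr 1
    funext t
    ring
  rw [h0, h1]
  ring

set_option maxHeartbeats 1000000 in
lemma ssc_descent {n : ℕ} (hn : 2 ≤ n) {lam : ℝ} (hl0 : 0 < lam)
    (hln : (n : ℝ) * lam < 1)
    (halam : lam < (1 - (n : ℝ) * lam) / ((n : ℝ) - 1)) :
    ∀ k : ℕ, ∀ a δ : ℝ, 0 < δ →
      (∀ i : ℕ, i ≤ n → a + i * δ ∈ selfSimilarSet n lam) →
      (n : ℝ) * δ ≤ lam ^ (k + 1) := by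
  have hn1 : (2 : ℝ) ≤ (n : ℝ) := by exact_mod_cast hn
  have hl1 : lam < 1 := by nlinarith
  set α : ℝ := (1 - (n : ℝ) * lam) / ((n : ℝ) - 1) with hαdef
  have hα0 : 0 < α := by apply div_pos <;> linarith
  set c : ℝ := lam + α with hcdef
  have hc0 : 0 < c := by positivity
  intro k
  induction k with
  | zero =>
    intro a δ hδ hAP
    have h0 := (ssc_mem_bounds hn hl0 hl1 (hAP 0 (Nat.zero_le n))).1
    have h1 := (ssc_mem_bounds hn hl0 hl1 (hAP n le_rfl)).2
    simp only [Nat.cast_zero, zero_mul, add_zero] at h0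
    rw [pow_one]
    linarith
  | succ k IH =>
    intro a δ hδ hAP
    have H : ∀ i : ℕ, ∃ j y, j < n ∧ y ∈ selfSimilarSet n lam ∧
        (i ≤ n → a + i * δ = c * lam * j + lam * y) := by
      intro i
      by_cases hi : i ≤ n
      · obtain ⟨j, y, hj, hy, hxy⟩ := ssc_decomp hn hl0 hl1 (hAP i hi)
        exact ⟨j, y, hj, hy, fun _ => hxy⟩
      · exact ⟨0, 0, by omega, ssc_zero_mem n lam (by omega), fun h => absurd h hi⟩
    choose j y hj hyE hxy using H
    have hy0 : ∀ i, 0 ≤ y i := fun i => (ssc_mem_bounds hn hl0 hl1 (hyE i)).1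
    have hy1 : ∀ i, y i ≤ lam := fun i => (ssc_mem_bounds hn hl0 hl1 (hyE i)).2
    by_cases hcons : ∀ i, i < n → j i = j (i + 1)
    · -- all first digits equal: zoom in
      have hall : ∀ i, i ≤ n → j i = j 0 := by
        intro i
        induction i with
        | zero => intro _; rfl
        | succ i ih =>
          intro hi
          rw [← hcons i (by omega)]
          exact ih (by omega)
      have hAP' : ∀ i : ℕ, i ≤ n →
          (a - c * lam * (j 0)) / lam + i * (δ / lam) ∈ selfSimilarSet n lam := by
        intro i hi
        have h1 := hxy i hi
        rw [hall i hi] at h1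
        have h2 : (a - c * lam * (j 0)) / lam + i * (δ / lam) = y i := by
          field_simp
          linarith
        rw [h2]
        exact hyE i
      have hIH := IH ((a - c * lam * (j 0)) / lam) (δ / lam) (div_pos hδ hl0) hAP'
      have : (n : ℝ) * δ = lam * ((n : ℝ) * (δ / lam)) := by
        field_simp
      rw [this]
      calc lam * ((n : ℝ) * (δ / lam)) ≤ lam * lam ^ (k + 1) :=
            mul_le_mul_of_nonneg_left hIH hl0.le
        _ = lam ^ (k + 1 + 1) := by ring
    · exfalso
      push_neg at hcons
      obtain ⟨i, hi, hne⟩ := hcons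
      have e1 := hxy i (by omega)
      have e2 := hxy (i + 1) (by omega)
      push_cast at e1 e2
      -- δ ≥ lam * α
      have hδα : lam * α ≤ δ := by
        rcases Nat.lt_or_ge (j i) (j (i + 1)) with h | h
        · have hcast : (j i : ℝ) + 1 ≤ (j (i + 1) : ℝ) := by exact_mod_cast h
          have h3 : c * lam * ((j i : ℝ) + 1) ≤ c * lam * (j (i + 1) : ℝ) :=
            mul_le_mul_of_nonneg_left hcast (by positivity)
          have h4 : 0 ≤ lam * y (i + 1) := mul_nonneg hl0.le (hy0 (i + 1))
          have h5 : lam * y i ≤ lam * lam := mul_le_mul_of_nonneg_left (hy1 i) hl0.le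
          nlinarith [e1, e2]
        · have hlt : j (i + 1) < j i := by omega
          have hcast : (j (i + 1) : ℝ) + 1 ≤ (j i : ℝ) := by exact_mod_cast hlt
          have h3 : c * lam * ((j (i + 1) : ℝ) + 1) ≤ c * lam * (j i : ℝ) :=
            mul_le_mul_of_nonneg_left hcast (by positivity)
          have h4 : 0 ≤ lam * y i := mul_nonneg hl0.le (hy0 i)
          have h5 : lam * y (i + 1) ≤ lam * lam := mul_le_mul_of_nonneg_left (hy1 (i + 1)) hl0.le
          nlinarith [e1, e2]
      -- pigeonhole: two AP points with the same first digit
      have key : ∀ p q : ℕ, p < q → q ≤ n → j p = j q → False := by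
        intro p q hpq hqn hjpq
        have ep := hxy p (by omega)
        have eq' := hxy q hqn
        rw [hjpq] at ep
        have hd1 : (1 : ℝ) ≤ (q : ℝ) - (p : ℝ) := by
          have : (p : ℝ) + 1 ≤ (q : ℝ) := by exact_mod_cast hpq
          linarith
        have hd3 : ((q : ℝ) - (p : ℝ)) * δ = lam * (y q - y p) := by
          linarith [ep, eq']
        have hd4 : lam * (y q - y p) ≤ lam * lam := by
          have : y q - y p ≤ lam := by linarith [hy0 p, hy1 q]
          exact mul_le_mul_of_nonneg_left this hl0.le
        have hd5 : lam * lam < lam * α := by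
          have : lam < α := halam
          exact mul_lt_mul_of_pos_left this hl0
        nlinarith [hd1, hd3, hd4, hd5, hδα, hδ]
      obtain ⟨p, hp, q, hq, hpq, hjpq⟩ :=
        Finset.exists_ne_map_eq_of_card_lt_of_maps_to
          (s := Finset.range (n + 1)) (t := Finset.range n) (f := j)
          (by simp) (fun i hi => Finset.mem_range.mpr (hj i))
      simp only [Finset.mem_range] at hp hq
      rcases lt_or_gt_of_ne hpq with h | h
      · exact key p q h (by omega) hjpq
      · exact key q p h (by omega) hjpq.symm

/-- If `E_λ^n` contains an arithmetic progression of length `n + 1`,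
then `λ ≥ 1/(2n - 1)`. -/
theorem ratio_ge_of_ap_length_succ (n : ℕ) (hn : 2 ≤ n)
    (lam : ℝ) (hlam : lam ∈ Set.Ioo (0:ℝ) (1 / n))
    (hAP : ∃ a δ : ℝ, 0 < δ ∧ ∀ i : ℕ, i ≤ n → a + i * δ ∈ selfSimilarSet n lam) :
    lam ≥ 1 / (2 * n - 1) := by
  by_contra hcon
  push_neg at hcon
  obtain ⟨hl0, hlu⟩ := hlam
  have hn1 : (2 : ℝ) ≤ (n : ℝ) := by exact_mod_cast hn
  have hn0 : (0 : ℝ) < (n : ℝ) := by linarith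
  have hln : (n : ℝ) * lam < 1 := by
    have := (lt_div_iff₀ hn0).mp hlu
    linarith
  have h2n : (0 : ℝ) < 2 * (n : ℝ) - 1 := by linarith
  have h2nl : lam * (2 * (n : ℝ) - 1) < 1 := (lt_div_iff₀ h2n).mp hcon
  have halam : lam < (1 - (n : ℝ) * lam) / ((n : ℝ) - 1) := by
    rw [lt_div_iff₀ (by linarith : (0 : ℝ) < (n : ℝ) - 1)]
    nlinarith
  obtain ⟨a, δ, hδ, hap⟩ := hAP
  have hdesc := ssc_descent hn hl0 hln halam
  have hl1 : lam < 1 := by nlinarith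
  have hnδ : 0 < (n : ℝ) * δ := by positivity
  obtain ⟨k, hk⟩ := exists_pow_lt_of_lt_one hnδ hl1
  have h1 := hdesc k a δ hδ hap
  have h2 : lam ^ (k + 1) ≤ lam ^ k := pow_le_pow_of_le_one hl0.le hl1.le (by omega)
  linarith
end

section
/- Let n ≥ 2 be an integer, λ ∈ (0, 1/n), α = (1 − nλ)/(n − 1), and let E_λ^n = { (λ+α)·∑_{t=1}^{∞} a_t λ^t : a_t ∈ {0,1,…,n−1} for all t ≥ 1 }. If λ ≥ 1/(2n − 1), then E_λ^n contains an arithmetic progression of length 2n: there exist a ∈ ℝ and δ > 0 with a + iδ ∈ E_λ^n for all 0 ≤ i ≤ 2n − 1. -/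
/-- Summability of digit series. -/
lemma summable_digit_series (lam : ℝ) (h0 : 0 ≤ lam) (h1 : lam < 1)
    (b : ℕ → ℕ) (C : ℕ) (hb : ∀ t, b t ≤ C) :
    Summable (fun t : ℕ => (b t : ℝ) * lam ^ (t + 1)) := by
  refine Summable.of_nonneg_of_le (fun t => by positivity) (fun t => ?_)
    ((summable_geometric_of_lt_one h0 h1).mul_left ((C : ℝ) * lam))
  have hbt : (b t : ℝ) ≤ (C : ℝ) := by exact_mod_cast hb t
  have hpow : (0:ℝ) ≤ lam ^ t := by positivity
  calc (b t : ℝ) * lam ^ (t+1) ≤ (C:ℝ) * lam ^ (t+1) := by nlinarith [pow_nonneg h0 (t+1)]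
    _ = ((C:ℝ) * lam) * lam ^ t := by ring

/-- Greedy expansion: with `N` digits `{0,…,N-1}` and ratio `lam` with `N·lam ≥ 1`,
every `x ∈ [0, (N-1)·lam/(1-lam)]` has a digit expansion. -/
lemma greedy_expansion (N : ℕ) (lam : ℝ) (h0 : 0 < lam) (h1 : lam < 1)
    (hNl : 1 ≤ (N : ℝ) * lam) (x : ℝ) (hx0 : 0 ≤ x)
    (hx1 : x ≤ ((N : ℝ) - 1) * lam / (1 - lam)) :
    ∃ d : ℕ → ℕ, (∀ t, d t < N) ∧ x = ∑' t : ℕ, (d t : ℝ) * lam ^ (t + 1) := by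
  have h1' : 0 < 1 - lam := by linarith
  set M : ℝ := ((N : ℝ) - 1) * lam / (1 - lam) with hMdef
  have hN1 : 1 ≤ N := by
    by_contra h
    push_neg at h
    interval_cases N
    · simp at hNl; linarith
  have hNR : (1:ℝ) ≤ (N:ℝ) := by exact_mod_cast hN1
  have hMeq : M * (1 - lam) = ((N:ℝ) - 1) * lam := by
    field_simp [hMdef]
    rw [hMdef, div_mul_cancel₀ _ h1'.ne']; ring
  have hM1 : 1 ≤ M := by
    rw [hMdef, le_div_iff₀ h1']; nlinarith
  classical
  let rem : ℕ → ℝ := fun t =>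
    Nat.rec x (fun _ r => r / lam - (min (N-1) ⌊r/lam⌋₊ : ℕ)) t
  let d : ℕ → ℕ := fun t => min (N-1) ⌊rem t / lam⌋₊
  have hrec : ∀ t, rem (t+1) = rem t / lam - (d t : ℝ) := fun t => rfl
  have hcastN1 : ((N - 1 : ℕ) : ℝ) = (N : ℝ) - 1 := by
    push_cast [Nat.cast_sub hN1]; ring
  have hinv : ∀ t, 0 ≤ rem t ∧ rem t ≤ M := by
    intro t
    induction t with
    | zero => exact ⟨hx0, hx1⟩
    | succ t ih =>
      obtain ⟨h0t, h1t⟩ := ih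
      have hy0 : 0 ≤ rem t / lam := div_nonneg h0t h0.le
      rw [hrec]
      by_cases hc : ⌊rem t / lam⌋₊ ≤ N - 1
      · have hdt : d t = ⌊rem t / lam⌋₊ := min_eq_right hc
        constructor
        · rw [hdt]
          have := Nat.floor_le hy0
          linarith
        · rw [hdt]
          have := Nat.lt_floor_add_one (rem t / lam)
          linarith
      · push_neg at hc
        have hdt : d t = N - 1 := min_eq_left hc.le
        have hcN : N ≤ ⌊rem t / lam⌋₊ := by omega
        have h2 : ((N:ℕ):ℝ) ≤ (⌊rem t / lam⌋₊ : ℝ) := by exact_mod_cast hcN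
        have h3 : (⌊rem t / lam⌋₊ : ℝ) ≤ rem t / lam := Nat.floor_le hy0
        rw [hdt, hcastN1]
        constructor
        · linarith
        · rw [sub_le_iff_le_add, div_le_iff₀ h0]
          nlinarith
  have hstep : ∀ t, rem t = (d t : ℝ) * lam + lam * rem (t+1) := by
    intro t
    rw [hrec]
    field_simp
    ring
  have hpart : ∀ T, x = (∑ t ∈ Finset.range T, (d t : ℝ) * lam ^ (t + 1))
      + lam ^ T * rem T := by
    intro T
    induction T with
    | zero => simp [rem]
    | succ T ih =>
      rw [Finset.sum_range_succ]
      have h := hstep T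
      rw [ih, h]
      ring
  have hdlt : ∀ t, d t < N := by
    intro t
    have : d t ≤ N - 1 := min_le_left _ _
    omega
  have hs : Summable (fun t : ℕ => (d t : ℝ) * lam ^ (t + 1)) :=
    summable_digit_series lam h0.le h1 d (N-1) (fun t => min_le_left _ _)
  have hlim : Filter.Tendsto (fun T => lam ^ T * rem T) Filter.atTop (nhds 0) := by
    apply squeeze_zero (g := fun T => M * lam ^ T)
      (fun T => mul_nonneg (by positivity) (hinv T).1) ?_ ?_
    · intro T
      show lam ^ T * rem T ≤ M * lam ^ T
      have h2 := (hinv T).2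
      have h3 : (0:ℝ) ≤ lam ^ T := by positivity
      nlinarith [mul_nonneg (sub_nonneg.mpr h2) h3]
    · have := (tendsto_pow_atTop_nhds_zero_of_lt_one h0.le h1).const_mul M
      simpa [mul_comm] using this
  have hlim2 : Filter.Tendsto (fun T => ∑ t ∈ Finset.range T, (d t : ℝ) * lam ^ (t + 1))
      Filter.atTop (nhds x) := by
    have : (fun T => ∑ t ∈ Finset.range T, (d t : ℝ) * lam ^ (t + 1))
        = fun T => x - lam ^ T * rem T := by
      funext T
      have := hpart T
      linarith
    rw [this]
    simpa using Filter.Tendsto.const_sub x hlim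
  exact ⟨d, hdlt, tendsto_nhds_unique hlim2 hs.hasSum.tendsto_sum_nat⟩


/-- If `λ ≥ 1/(2n - 1)`, then `E_λ^n` contains an arithmetic progression
of length `2n`. -/
theorem ap_length_two_n_of_ratio_ge (n : ℕ) (hn : 2 ≤ n)
    (lam : ℝ) (hlam : lam ∈ Set.Ioo (0:ℝ) (1 / n))
    (hge : lam ≥ 1 / (2 * n - 1)) :
    ∃ a δ : ℝ, 0 < δ ∧ ∀ i : ℕ, i < 2 * n → a + i * δ ∈ selfSimilarSet n lam := by
  obtain ⟨h0, hlt⟩ := hlam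
  have hnR : (2:ℝ) ≤ (n:ℝ) := by exact_mod_cast hn
  have hnpos : (0:ℝ) < (n:ℝ) := by linarith
  have h2n1 : (0:ℝ) < 2 * (n:ℝ) - 1 := by linarith
  have h1 : lam < 1 := by
    have : 1 / (n:ℝ) ≤ 1 / 2 := by
      apply div_le_div_of_nonneg_left <;> linarith
    linarith
  have h1' : (0:ℝ) < 1 - lam := by linarith
  have hge' : 1 ≤ (2 * (n:ℝ) - 1) * lam := by
    rw [ge_iff_le, div_le_iff₀ h2n1] at hge
    linarith
  set N : ℕ := 2 * n - 1 with hNdef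
  have hNcast : ((N:ℕ):ℝ) = 2 * (n:ℝ) - 1 := by
    push_cast [hNdef, Nat.cast_sub (by omega : 1 ≤ 2 * n)]
    ring
  set M : ℝ := ((n:ℝ) - 1) * lam / (1 - lam) with hMdef
  have hMhalf : 1 / 2 ≤ M := by
    rw [hMdef, le_div_iff₀ h1']
    nlinarith
  have hx0 : (0:ℝ) ≤ 1 / 2 + M := by
    have : (0:ℝ) ≤ M := le_trans (by norm_num) hMhalf
    linarith
  have hx1 : 1 / 2 + M ≤ ((N:ℝ) - 1) * lam / (1 - lam) := by
    have : ((N:ℝ) - 1) * lam / (1 - lam) = 2 * M := by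
      rw [hNcast, hMdef]; field_simp; ring
    rw [this]; linarith
  obtain ⟨d, hd, hdsum⟩ := greedy_expansion N lam h0 h1
    (by rw [hNcast]; linarith) (1/2 + M) hx0 hx1
  set u : ℕ → ℕ := fun t => (n - 1) - d t with hu
  set v : ℕ → ℕ := fun t => d t - (n - 1) with hv
  have hub : ∀ t, u t ≤ n - 1 := by
    intro t
    show (n - 1) - d t ≤ n - 1
    omega
  have hvb : ∀ t, v t ≤ n - 1 := by
    intro t
    have h := hd t
    rw [hNdef] at h
    show d t - (n - 1) ≤ n - 1
    omega
  have hsu : Summable (fun t : ℕ => (u t : ℝ) * lam ^ (t + 1)) :=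
    summable_digit_series lam h0.le h1 u (n-1) hub
  have hsv : Summable (fun t : ℕ => (v t : ℝ) * lam ^ (t + 1)) :=
    summable_digit_series lam h0.le h1 v (n-1) hvb
  have hsd : Summable (fun t : ℕ => (d t : ℝ) * lam ^ (t + 1)) :=
    summable_digit_series lam h0.le h1 d N (fun t => (hd t).le)
  have hsc : Summable (fun t : ℕ => ((n - 1 : ℕ) : ℝ) * lam ^ (t + 1)) :=
    summable_digit_series lam h0.le h1 (fun _ => n - 1) (n-1) (fun _ => le_refl _)
  set Su : ℝ := ∑' t : ℕ, (u t : ℝ) * lam ^ (t + 1) with hSu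
  set Sv : ℝ := ∑' t : ℕ, (v t : ℝ) * lam ^ (t + 1) with hSv
  have hn1cast : ((n - 1 : ℕ) : ℝ) = (n:ℝ) - 1 := by
    push_cast [Nat.cast_sub (by omega : 1 ≤ n)]; ring
  have hgeo : ∑' t : ℕ, ((n - 1 : ℕ) : ℝ) * lam ^ (t + 1) = M := by
    have he : ∀ t : ℕ, ((n - 1 : ℕ) : ℝ) * lam ^ (t + 1)
        = (((n:ℝ) - 1) * lam) * lam ^ t := by
      intro t; rw [hn1cast]; ring
    rw [tsum_congr he, tsum_mul_left, tsum_geometric_of_lt_one h0.le h1, hMdef]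
    field_simp
  have hkey : ∀ t : ℕ, ((v t : ℝ) + ((n - 1 : ℕ) : ℝ)) = ((u t : ℝ) + (d t : ℝ)) := by
    intro t
    have h := hd t
    rw [hNdef] at h
    have hnat : v t + (n - 1) = u t + d t := by
      show (d t - (n - 1)) + (n - 1) = ((n - 1) - d t) + d t
      omega
    exact_mod_cast hnat
  have hSvSu : Sv = Su + 1 / 2 := by
    have h1t : ∑' t : ℕ, ((v t : ℝ) * lam ^ (t+1) + ((n-1:ℕ):ℝ) * lam ^ (t+1))
        = ∑' t : ℕ, ((u t : ℝ) * lam ^ (t+1) + (d t : ℝ) * lam ^ (t+1)) := by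
      apply tsum_congr
      intro t
      linear_combination (hkey t) * lam ^ (t + 1)
    rw [Summable.tsum_add hsv hsc, Summable.tsum_add hsu hsd, hgeo, ← hdsum, ← hSu, ← hSv] at h1t
    linarith
  set c : ℝ := lam + (1 - (n:ℝ) * lam) / ((n:ℝ) - 1) with hc
  have hne : (n:ℝ) - 1 ≠ 0 := by linarith
  have hceq : c = (1 - lam) / ((n:ℝ) - 1) := by
    rw [hc]
    field_simp
    ring
  have hcpos : 0 < c := by
    rw [hceq]
    apply div_pos h1'
    linarith
  refine ⟨c * lam * Su, c * lam / 2, by positivity, ?_⟩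
  intro i hi
  set q : ℕ := i / 2 with hq
  have hqn : q < n := by omega
  by_cases hr : i % 2 = 0
  · refine ⟨fun t => if t = 0 then q else u (t - 1), ?_, ?_⟩
    · intro t
      rcases t with _ | t
      · simpa using hqn
      · simpa using lt_of_le_of_lt (hub t) (by omega : n - 1 < n)
    · have hAs : Summable (fun t : ℕ =>
          ((if t = 0 then q else u (t - 1) : ℕ) : ℝ) * lam ^ (t + 1)) := by
        apply summable_digit_series lam h0.le h1 _ (max q (n-1))
        intro t
        rcases t with _ | t
        · simpa using le_max_left q (n-1)
        · simpa using le_max_of_le_right (hub t)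
      rw [Summable.tsum_eq_zero_add hAs]
      have hf0 : ((if (0:ℕ) = 0 then q else u (0 - 1) : ℕ) : ℝ) * lam ^ (0 + 1)
          = (q:ℝ) * lam := by norm_num
      have htail : ∑' t : ℕ, ((if t + 1 = 0 then (q:ℕ) else u (t + 1 - 1) : ℕ) : ℝ)
          * lam ^ (t + 1 + 1) = lam * Su := by
        rw [hSu, ← tsum_mul_left]
        apply tsum_congr
        intro t
        simp only [Nat.add_sub_cancel, if_neg (Nat.succ_ne_zero t)]
        ring
      rw [hf0, htail]
      have hiq : (i : ℝ) = 2 * (q : ℝ) := by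
        have h2 : i = 2 * q := by omega
        exact_mod_cast h2
      rw [hiq, ← hc]
      ring
  · refine ⟨fun t => if t = 0 then q else v (t - 1), ?_, ?_⟩
    · intro t
      rcases t with _ | t
      · simpa using hqn
      · simpa using lt_of_le_of_lt (hvb t) (by omega : n - 1 < n)
    · have hAs : Summable (fun t : ℕ =>
          ((if t = 0 then q else v (t - 1) : ℕ) : ℝ) * lam ^ (t + 1)) := by
        apply summable_digit_series lam h0.le h1 _ (max q (n-1))
        intro t
        rcases t with _ | t
        · simpa using le_max_left q (n-1)
        · simpa using le_max_of_le_right (hvb t)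
      rw [Summable.tsum_eq_zero_add hAs]
      have hf0 : ((if (0:ℕ) = 0 then q else v (0 - 1) : ℕ) : ℝ) * lam ^ (0 + 1)
          = (q:ℝ) * lam := by norm_num
      have htail : ∑' t : ℕ, ((if t + 1 = 0 then (q:ℕ) else v (t + 1 - 1) : ℕ) : ℝ)
          * lam ^ (t + 1 + 1) = lam * Sv := by
        rw [hSv, ← tsum_mul_left]
        apply tsum_congr
        intro t
        simp only [Nat.add_sub_cancel, if_neg (Nat.succ_ne_zero t)]
        ring
      rw [hf0, htail, hSvSu]
      have hiq : (i : ℝ) = 2 * (q : ℝ) + 1 := by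
        have h2 : i = 2 * q + 1 := by omega
        exact_mod_cast h2
      rw [hiq, ← hc]
      ring
end

section
/- Let n ≥ 2 be an integer, λ ∈ (0, 1/n), α = (1 − nλ)/(n − 1), and let E_λ^n = { (λ+α)·∑_{t=1}^{∞} a_t λ^t : a_t ∈ {0,1,…,n−1} for all t ≥ 1 }. Then the maximal length of an arithmetic progression contained in E_λ^n equals n if and only if λ < 1/(2n−1); that is: E_λ^n contains an arithmetic progression of length n but no arithmetic progression of length n+1, if and only if λ ∈ (0, 1/(2n−1)). -/
namespace APaux

/-- Digit set version: `Gs n lam` = all sums `∑ a_t lam^t` with digits `< n`. -/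
def Gs (n : ℕ) (lam : ℝ) : Set ℝ :=
  {y : ℝ | ∃ a : ℕ → ℕ, (∀ t, a t < n) ∧ y = ∑' t : ℕ, (a t : ℝ) * lam ^ t}

variable {n : ℕ} {lam : ℝ}

lemma summable_dig (h0 : 0 ≤ lam) (h1 : lam < 1) {m : ℕ} (a : ℕ → ℕ) (ha : ∀ t, a t ≤ m) :
    Summable (fun t : ℕ => (a t : ℝ) * lam ^ t) := by
  refine Summable.of_nonneg_of_le
    (fun t => mul_nonneg (Nat.cast_nonneg _) (pow_nonneg h0 t)) (fun t => ?_)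
    ((summable_geometric_of_lt_one h0 h1).mul_left (m : ℝ))
  exact mul_le_mul_of_nonneg_right (by exact_mod_cast ha t) (pow_nonneg h0 t)

lemma tsum_dig_nonneg (h0 : 0 ≤ lam) (a : ℕ → ℕ) :
    0 ≤ ∑' t : ℕ, (a t : ℝ) * lam ^ t :=
  tsum_nonneg fun t => mul_nonneg (Nat.cast_nonneg _) (pow_nonneg h0 t)

lemma tsum_dig_le (h0 : 0 ≤ lam) (h1 : lam < 1) {m : ℕ} (a : ℕ → ℕ) (ha : ∀ t, a t ≤ m) :
    ∑' t : ℕ, (a t : ℝ) * lam ^ t ≤ (m : ℝ) / (1 - lam) := by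
  have h := Summable.tsum_le_tsum (f := fun t : ℕ => (a t : ℝ) * lam ^ t)
    (g := fun t : ℕ => (m : ℝ) * lam ^ t)
    (fun t => mul_le_mul_of_nonneg_right (by exact_mod_cast ha t) (pow_nonneg h0 t))
    (summable_dig h0 h1 a ha) ((summable_geometric_of_lt_one h0 h1).mul_left _)
  rwa [tsum_mul_left, tsum_geometric_of_lt_one h0 h1, ← div_eq_mul_inv] at h

lemma const_tsum (h0 : 0 ≤ lam) (h1 : lam < 1) (m : ℕ) :
    ∑' t : ℕ, (m : ℝ) * lam ^ t = (m : ℝ) / (1 - lam) := by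
  rw [tsum_mul_left, tsum_geometric_of_lt_one h0 h1, ← div_eq_mul_inv]

lemma zero_mem_Gs (hn : 0 < n) : (0 : ℝ) ∈ Gs n lam :=
  ⟨fun _ => 0, fun _ => hn, by simp⟩

lemma shift_mem_Gs (h0 : 0 ≤ lam) (h1 : lam < 1) {d : ℕ} (hd : d < n) {y : ℝ}
    (hy : y ∈ Gs n lam) : ((d : ℝ) + lam * y) ∈ Gs n lam := by
  obtain ⟨a, ha, rfl⟩ := hy
  refine ⟨fun t => Nat.rec d (fun s _ => a s) t, ?_, ?_⟩
  · intro t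
    cases t with
    | zero => exact hd
    | succ s => exact ha s
  · have hsum : Summable (fun t : ℕ => ((Nat.rec d (fun s _ => a s) t : ℕ) : ℝ) * lam ^ t) := by
      refine summable_dig h0 h1 _ (m := n - 1) (fun t => ?_)
      cases t with
      | zero => show d ≤ n - 1; omega
      | succ s => show a s ≤ n - 1; have := ha s; omega
    symm
    rw [Summable.tsum_eq_zero_add hsum]
    have h2 : ∀ t : ℕ, ((Nat.rec d (fun s _ => a s) (t + 1) : ℕ) : ℝ) * lam ^ (t + 1)
        = lam * ((a t : ℝ) * lam ^ t) := fun t => by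
      show ((a t : ℝ)) * lam ^ (t + 1) = _; ring
    simp only [h2]
    rw [tsum_mul_left]
    show (d : ℝ) * lam ^ 0 + lam * _ = _
    ring

lemma split_Gs (h0 : 0 ≤ lam) (h1 : lam < 1) (hn : 0 < n) {x : ℝ} (hx : x ∈ Gs n lam) :
    ∃ d : ℕ, d < n ∧ ∃ y ∈ Gs n lam, x = (d : ℝ) + lam * y := by
  obtain ⟨a, ha, rfl⟩ := hx
  refine ⟨a 0, ha 0, ∑' t : ℕ, (a (t + 1) : ℝ) * lam ^ t, ⟨fun t => a (t + 1), fun t => ha _, rfl⟩, ?_⟩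
  rw [Summable.tsum_eq_zero_add (summable_dig h0 h1 a (m := n - 1) (fun t => by have := ha t; omega))]
  have : ∀ t : ℕ, (a (t + 1) : ℝ) * lam ^ (t + 1) = lam * ((a (t + 1) : ℝ) * lam ^ t) :=
    fun t => by ring
  simp only [this]
  rw [tsum_mul_left]
  simp

lemma nat_mem_Gs (h0 : 0 ≤ lam) (h1 : lam < 1) {i : ℕ} (hi : i < n) : (i : ℝ) ∈ Gs n lam := by
  have := shift_mem_Gs h0 h1 hi (zero_mem_Gs (n := n) (lam := lam) (by omega))
  simpa using this

lemma Gs_nonneg (h0 : 0 ≤ lam) {x : ℝ} (hx : x ∈ Gs n lam) : 0 ≤ x := by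
  obtain ⟨a, _, rfl⟩ := hx; exact tsum_dig_nonneg h0 a

lemma Gs_le (h0 : 0 ≤ lam) (h1 : lam < 1) (hn : 0 < n) {x : ℝ} (hx : x ∈ Gs n lam) :
    x ≤ ((n : ℝ) - 1) / (1 - lam) := by
  obtain ⟨a, ha, rfl⟩ := hx
  have h := tsum_dig_le h0 h1 a (m := n - 1) (fun t => by have := ha t; omega)
  have : ((n - 1 : ℕ) : ℝ) = (n : ℝ) - 1 := by
    push_cast [Nat.cast_sub (by omega : 1 ≤ n)]; ring
  rwa [this] at h



/-- greedy remainder sequence for representing `D` in base `lam` with digits `≤ m`. -/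
noncomputable def gr (m : ℕ) (lam : ℝ) (D : ℝ) : ℕ → ℝ
  | 0 => D
  | (t + 1) => (gr m lam D t - (min m ⌊gr m lam D t⌋₊ : ℕ)) / lam

/-- greedy digits -/
noncomputable def dig (m : ℕ) (lam : ℝ) (D : ℝ) (t : ℕ) : ℕ := min m ⌊gr m lam D t⌋₊

lemma gr_invariant (m : ℕ) {lam : ℝ} (h0 : 0 < lam) (h1 : lam < 1)
    (hkey : 1 ≤ lam * ((m : ℝ) / (1 - lam))) {D : ℝ}
    (hD0 : 0 ≤ D) (hDL : D ≤ (m : ℝ) / (1 - lam)) :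
    ∀ t, 0 ≤ gr m lam D t ∧ gr m lam D t ≤ (m : ℝ) / (1 - lam) := by
  intro t
  induction t with
  | zero => exact ⟨hD0, hDL⟩
  | succ t ih =>
    obtain ⟨hr0, hrL⟩ := ih
    constructor
    · apply div_nonneg _ h0.le
      have h3 : ((min m ⌊gr m lam D t⌋₊ : ℕ) : ℝ) ≤ ⌊gr m lam D t⌋₊ := by
        exact_mod_cast Nat.cast_le.mpr (min_le_right _ _)
      have h4 : (⌊gr m lam D t⌋₊ : ℝ) ≤ gr m lam D t := Nat.floor_le hr0
      show 0 ≤ gr m lam D t - _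
      linarith
    · show (gr m lam D t - _) / lam ≤ _
      rw [div_le_iff₀ h0]
      rcases le_or_gt (m : ℕ) ⌊gr m lam D t⌋₊ with h | h
      · rw [min_eq_left h]
        have hne : (1 : ℝ) - lam ≠ 0 := by linarith
        have : (m : ℝ) / (1 - lam) - (m : ℝ) = lam * ((m : ℝ) / (1 - lam)) := by
          field_simp
          ring
        have h5 : (m : ℝ) / (1 - lam) * lam = lam * ((m : ℝ) / (1 - lam)) := by ring
        linarith
      · rw [min_eq_right h.le]
        have h4 : gr m lam D t - ⌊gr m lam D t⌋₊ < 1 := by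
          have := Nat.lt_floor_add_one (gr m lam D t)
          linarith
        have h5 : (m : ℝ) / (1 - lam) * lam = lam * ((m : ℝ) / (1 - lam)) := by ring
        linarith

lemma gr_telescope (m : ℕ) {lam : ℝ} (h0 : 0 < lam) (D : ℝ) :
    ∀ k, D - ∑ t ∈ Finset.range k, (dig m lam D t : ℝ) * lam ^ t = lam ^ k * gr m lam D k := by
  intro k
  induction k with
  | zero => simp [gr]
  | succ k ih =>
    rw [Finset.sum_range_succ]
    have hlne : lam ≠ 0 := ne_of_gt h0
    have hg : lam ^ (k + 1) * gr m lam D (k + 1)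
        = lam ^ k * gr m lam D k - (dig m lam D k : ℝ) * lam ^ k := by
      show lam ^ (k + 1) * ((gr m lam D k - (dig m lam D k : ℕ)) / lam) = _
      rw [pow_succ]
      field_simp
    rw [hg]
    linarith [ih]

lemma gr_repr (m : ℕ) {lam : ℝ} (h0 : 0 < lam) (h1 : lam < 1)
    (hkey : 1 ≤ lam * ((m : ℝ) / (1 - lam))) {D : ℝ}
    (hD0 : 0 ≤ D) (hDL : D ≤ (m : ℝ) / (1 - lam)) :
    D = ∑' t : ℕ, (dig m lam D t : ℝ) * lam ^ t := by
  have hsum : Summable (fun t : ℕ => (dig m lam D t : ℝ) * lam ^ t) := by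
    refine Summable.of_nonneg_of_le
      (fun t => mul_nonneg (Nat.cast_nonneg _) (pow_nonneg h0.le t)) (fun t => ?_)
      ((summable_geometric_of_lt_one h0.le h1).mul_left (m : ℝ))
    exact mul_le_mul_of_nonneg_right
      (by exact_mod_cast min_le_left _ _) (pow_nonneg h0.le t)
  have h2 : Filter.Tendsto (fun k => ∑ t ∈ Finset.range k, (dig m lam D t : ℝ) * lam ^ t)
      Filter.atTop (nhds D) := by
    have h3 : Filter.Tendsto (fun k : ℕ => D - lam ^ k * gr m lam D k)
        Filter.atTop (nhds D) := by
      have h4 : Filter.Tendsto (fun k : ℕ => lam ^ k * gr m lam D k) Filter.atTop (nhds 0) := by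
        apply squeeze_zero (fun k => mul_nonneg (pow_nonneg h0.le k)
          (gr_invariant m h0 h1 hkey hD0 hDL k).1)
          (fun k => mul_le_mul_of_nonneg_left
            (gr_invariant m h0 h1 hkey hD0 hDL k).2 (pow_nonneg h0.le k))
        have := tendsto_pow_atTop_nhds_zero_of_lt_one h0.le h1 (r := lam)
        simpa using this.mul_const ((m : ℝ) / (1 - lam))
      simpa using (tendsto_const_nhds (x := D)).sub h4
    refine h3.congr (fun k => ?_)
    have := gr_telescope m h0 D k
    linarith
  exact tendsto_nhds_unique h2 (hsum.hasSum.tendsto_sum_nat)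

lemma dig_le (m : ℕ) (lam : ℝ) (D : ℝ) (t : ℕ) : dig m lam D t ≤ m := min_le_left _ _



section Constr
variable {n : ℕ} {lam : ℝ}

/-- When `(2n-1)·lam ≥ 1`, every `D ∈ [0, M]` is a difference of two points of `Gs`. -/
lemma diff_repr (hn : 2 ≤ n) (h0 : 0 < lam) (h1 : lam < 1)
    (hbig : 1 ≤ (2 * (n : ℝ) - 1) * lam) {D : ℝ}
    (hD0 : 0 ≤ D) (hDM : D ≤ ((n : ℝ) - 1) / (1 - lam)) :
    ∃ x ∈ Gs n lam, ∃ y ∈ Gs n lam, y - x = D := by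
  set m : ℕ := 2 * n - 2 with hm
  have hmcast : (m : ℝ) = 2 * (n : ℝ) - 2 := by
    push_cast [hm, Nat.cast_sub (by omega : 2 ≤ 2 * n)]; ring
  have hne : (1 : ℝ) - lam ≠ 0 := by linarith
  have hMpos : (0:ℝ) < 1 - lam := by linarith
  have hkey : 1 ≤ lam * ((m : ℝ) / (1 - lam)) := by
    have h2 : lam * ((m : ℝ) / (1 - lam)) = (2 * (n : ℝ) - 2) * lam / (1 - lam) := by
      rw [hmcast]; ring
    rw [h2, le_div_iff₀ hMpos]
    nlinarith [hbig]
  have hn1 : ((n - 1 : ℕ) : ℝ) = (n : ℝ) - 1 := by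
    push_cast [Nat.cast_sub (by omega : 1 ≤ n)]; ring
  set M : ℝ := ((n : ℝ) - 1) / (1 - lam) with hMdef
  have hn2 : (2 : ℝ) ≤ (n : ℝ) := by exact_mod_cast hn
  have hDM2 : D + M ≤ (m : ℝ) / (1 - lam) := by
    have h3 : (m : ℝ) / (1 - lam) = M + M := by
      rw [hmcast, hMdef]; field_simp; ring
    rw [h3]; linarith [hDM]
  have hMnn : 0 ≤ M := by
    rw [hMdef]; exact div_nonneg (by linarith) hMpos.le
  have hD02 : 0 ≤ D + M := by linarith
  have hrepr := gr_repr m h0 h1 hkey hD02 hDM2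
  set c : ℕ → ℕ := fun t => dig m lam (D + M) t with hc
  have hcle : ∀ t, c t ≤ m := fun t => dig_le m lam (D + M) t
  set ydig : ℕ → ℕ := fun t => min (c t) (n - 1) with hydig
  set xdig : ℕ → ℕ := fun t => m - max (c t) (n - 1) with hxdig
  have hykey : ∀ t, ydig t + (n - 1) = xdig t + c t := by
    intro t
    have := hcle t
    simp only [hydig, hxdig, hm] at *
    omega
  have hylt : ∀ t, ydig t < n := by
    intro t; have := hcle t; simp only [hydig, hxdig, hm] at *; omega
  have hxlt : ∀ t, xdig t < n := by
    intro t; have := hcle t; simp only [hydig, hxdig, hm] at *; omega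
  refine ⟨∑' t : ℕ, (xdig t : ℝ) * lam ^ t, ⟨xdig, hxlt, rfl⟩,
        ∑' t : ℕ, (ydig t : ℝ) * lam ^ t, ⟨ydig, hylt, rfl⟩, ?_⟩
  have hsx : Summable (fun t : ℕ => (xdig t : ℝ) * lam ^ t) :=
    summable_dig h0.le h1 _ (m := n - 1) (fun t => by have := hxlt t; omega)
  have hsy : Summable (fun t : ℕ => (ydig t : ℝ) * lam ^ t) :=
    summable_dig h0.le h1 _ (m := n - 1) (fun t => by have := hylt t; omega)
  have hsc : Summable (fun t : ℕ => (c t : ℝ) * lam ^ t) :=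
    summable_dig h0.le h1 _ (m := m) hcle
  have hsn : Summable (fun t : ℕ => ((n - 1 : ℕ) : ℝ) * lam ^ t) :=
    (summable_geometric_of_lt_one h0.le h1).mul_left _
  rw [← Summable.tsum_sub hsy hsx]
  have hpt : ∀ t : ℕ, (ydig t : ℝ) * lam ^ t - (xdig t : ℝ) * lam ^ t
      = (c t : ℝ) * lam ^ t - ((n - 1 : ℕ) : ℝ) * lam ^ t := by
    intro t
    have := hykey t
    have hcast : (ydig t : ℝ) + ((n - 1 : ℕ) : ℝ) = (xdig t : ℝ) + (c t : ℝ) := by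
      exact_mod_cast congrArg (Nat.cast : ℕ → ℝ) this
    have h5 : (ydig t : ℝ) - (xdig t : ℝ) = (c t : ℝ) - ((n - 1 : ℕ) : ℝ) := by linarith
    rw [show (ydig t : ℝ) * lam ^ t - (xdig t : ℝ) * lam ^ t
        = ((ydig t : ℝ) - (xdig t : ℝ)) * lam ^ t by ring, h5]
    ring
  rw [tsum_congr hpt, Summable.tsum_sub hsc hsn, ← hrepr, const_tsum h0.le h1 (n - 1), hn1]
  ring

end Constr

section Constr2
variable {n : ℕ} {lam : ℝ}

lemma ap_succ (hn : 2 ≤ n) (h0 : 0 < lam) (h1 : lam < 1)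
    (hbig : 1 ≤ (2 * (n : ℝ) - 1) * lam) :
    ∃ a δ : ℝ, 0 < δ ∧ ∀ i : ℕ, i ≤ n → a + i * δ ∈ Gs n lam := by
  have hn2 : (2 : ℝ) ≤ (n : ℝ) := by exact_mod_cast hn
  have hMpos : (0:ℝ) < 1 - lam := by linarith
  have hD0 : (0:ℝ) ≤ 1 / (2 * lam) := by positivity
  have hDM : 1 / (2 * lam) ≤ ((n : ℝ) - 1) / (1 - lam) := by
    rw [div_le_div_iff₀ (by linarith) hMpos]
    nlinarith [hbig]
  obtain ⟨x, hx, y, hy, hxy⟩ := diff_repr hn h0 h1 hbig hD0 hDM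
  refine ⟨lam * x, 1 / 2, by norm_num, ?_⟩
  intro i hi
  rcases Nat.even_or_odd i with ⟨p, hp⟩ | ⟨p, hp⟩
  · have hpn : p < n := by omega
    have hcast : (i : ℝ) = 2 * p := by
      rw [hp]; push_cast; ring
    have heq : lam * x + (i : ℝ) * (1 / 2) = (p : ℝ) + lam * x := by
      rw [hcast]; ring
    rw [heq]
    exact shift_mem_Gs h0.le h1 hpn hx
  · have hpn : p < n := by omega
    have hcast : (i : ℝ) = 2 * p + 1 := by
      rw [hp]; push_cast; ring
    have hlamy : lam * y = lam * x + 1 / 2 := by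
      have h2 : y = x + 1 / (2 * lam) := by linarith [hxy]
      rw [h2]
      field_simp
    have heq : lam * x + (i : ℝ) * (1 / 2) = (p : ℝ) + lam * y := by
      rw [hcast, hlamy]; ring
    rw [heq]
    exact shift_mem_Gs h0.le h1 hpn hy

end Constr2

section Descent
variable {n : ℕ} {lam : ℝ}

lemma choose_digits (hn : 2 ≤ n) (h0 : 0 < lam) (h1 : lam < 1) {a δ : ℝ}
    (H : ∀ i : ℕ, i ≤ n → a + i * δ ∈ Gs n lam) :
    ∃ d : ℕ → ℕ, ∃ y : ℕ → ℝ, ∀ i : ℕ, i ≤ n →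
      (d i < n ∧ y i ∈ Gs n lam ∧ a + i * δ = d i + lam * y i) := by
  have Hc : ∀ i : ℕ, ∃ dd : ℕ, ∃ yy : ℝ, i ≤ n →
      (dd < n ∧ yy ∈ Gs n lam ∧ a + i * δ = dd + lam * yy) := by
    intro i
    by_cases hi : i ≤ n
    · obtain ⟨dd, hd, yy, hy, hxy⟩ := split_Gs h0.le h1 (by omega) (H i hi)
      exact ⟨dd, yy, fun _ => ⟨hd, hy, hxy⟩⟩
    · exact ⟨0, 0, fun h => absurd h hi⟩
  choose d y hdy using Hc
  exact ⟨d, y, hdy⟩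

lemma delta_le (hn : 2 ≤ n) (h0 : 0 < lam) (h1 : lam < 1) (hnl : (n : ℝ) * lam < 1)
    {a δ : ℝ} (hδ : 0 < δ) (H : ∀ i : ℕ, i ≤ n → a + i * δ ∈ Gs n lam) :
    δ ≤ lam * (((n : ℝ) - 1) / (1 - lam)) := by
  obtain ⟨d, y, hdy⟩ := choose_digits hn h0 h1 H
  set M : ℝ := ((n : ℝ) - 1) / (1 - lam) with hM
  have hMpos : (0:ℝ) < 1 - lam := by linarith
  have hlM : lam * M < 1 := by
    rw [hM, mul_div_assoc']
    rw [div_lt_one hMpos]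
    nlinarith [hnl]
  have hbound : ∀ i : ℕ, i ≤ n → (d i : ℝ) ≤ a + i * δ ∧ a + i * δ ≤ d i + lam * M := by
    intro i hi
    obtain ⟨hdn, hy, hxy⟩ := hdy i hi
    have h2 : 0 ≤ y i := Gs_nonneg h0.le hy
    have h3 : y i ≤ M := Gs_le h0.le h1 (by omega) hy
    constructor
    · nlinarith [hxy]
    · nlinarith [hxy]
  have hmono : ∀ i : ℕ, i < n → d i ≤ d (i + 1) := by
    intro i hi
    by_contra hlt
    push_neg at hlt
    have h4 := (hbound i (by omega)).1
    have h5 := (hbound (i+1) (by omega)).2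
    have h6 : (d (i+1) : ℝ) + 1 ≤ d i := by exact_mod_cast hlt
    have h7 : ((i+1 : ℕ) : ℝ) = (i : ℝ) + 1 := by push_cast; ring
    rw [h7] at h5
    nlinarith
  have hrep : ∃ i : ℕ, i < n ∧ d (i + 1) = d i := by
    by_contra hh
    push_neg at hh
    have hstrict : ∀ i : ℕ, i < n → d i < d (i + 1) := fun i hi =>
      lt_of_le_of_ne (hmono i hi) (fun h => hh i hi h.symm)
    have hge : ∀ k : ℕ, k ≤ n → k ≤ d k := by
      intro k
      induction k with
      | zero => omega
      | succ k ih => intro hk; have := hstrict k (by omega); have := ih (by omega); omega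
    have := hge n le_rfl
    have := (hdy n le_rfl).1
    omega
  obtain ⟨i, hi, hieq⟩ := hrep
  have h4 := (hbound i (by omega)).1
  have h5 := (hbound (i+1) (by omega)).2
  have h7 : ((i+1 : ℕ) : ℝ) = (i : ℝ) + 1 := by push_cast; ring
  rw [h7, hieq] at h5
  linarith

lemma descend (hn : 2 ≤ n) (h0 : 0 < lam) (h1 : lam < 1) (hnl : (n : ℝ) * lam < 1)
    (hsmall : lam * (((n : ℝ) - 1) / (1 - lam)) < 1 / 2) {a δ : ℝ} (hδ : 0 < δ)
    (H : ∀ i : ℕ, i ≤ n → a + i * δ ∈ Gs n lam) :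
    ∃ a' : ℝ, ∀ i : ℕ, i ≤ n → a' + i * (δ / lam) ∈ Gs n lam := by
  have hδle := delta_le hn h0 h1 hnl hδ H
  obtain ⟨d, y, hdy⟩ := choose_digits hn h0 h1 H
  set M : ℝ := ((n : ℝ) - 1) / (1 - lam) with hM
  have hbound : ∀ i : ℕ, i ≤ n → (d i : ℝ) ≤ a + i * δ ∧ a + i * δ ≤ d i + lam * M := by
    intro i hi
    obtain ⟨hdn, hy, hxy⟩ := hdy i hi
    have h2 : 0 ≤ y i := Gs_nonneg h0.le hy
    have h3 : y i ≤ M := Gs_le h0.le h1 (by omega) hy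
    constructor
    · nlinarith [hxy]
    · nlinarith [hxy]
  have hstep : ∀ i : ℕ, i < n → d (i + 1) = d i := by
    intro i hi
    have h4i := (hbound i (by omega)).1
    have h4i' := (hbound i (by omega)).2
    have h5 := (hbound (i+1) (by omega)).1
    have h5' := (hbound (i+1) (by omega)).2
    have h7 : ((i+1 : ℕ) : ℝ) = (i : ℝ) + 1 := by push_cast; ring
    rw [h7] at h5 h5'
    by_contra hne
    rcases Nat.lt_or_ge (d i) (d (i+1)) with hlt | hge
    · have h6 : (d i : ℝ) + 1 ≤ d (i+1) := by exact_mod_cast hlt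
      nlinarith
    · have hlt : d (i+1) < d i := by omega
      have h6 : (d (i+1) : ℝ) + 1 ≤ d i := by exact_mod_cast hlt
      nlinarith
  have hconst : ∀ i : ℕ, i ≤ n → d i = d 0 := by
    intro i
    induction i with
    | zero => intro _; rfl
    | succ i ih => intro hi; rw [hstep i (by omega)]; exact ih (by omega)
  refine ⟨(a - d 0) / lam, fun i hi => ?_⟩
  obtain ⟨hdn, hy, hxy⟩ := hdy i hi
  rw [hconst i hi] at hxy
  have heq : (a - d 0) / lam + i * (δ / lam) = y i := by
    field_simp
    linarith [hxy]
  rw [heq]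
  exact hy

lemma no_ap (hn : 2 ≤ n) (h0 : 0 < lam) (h1 : lam < 1) (hnl : (n : ℝ) * lam < 1)
    (hsm : (2 * (n : ℝ) - 1) * lam < 1) :
    ¬ ∃ a δ : ℝ, 0 < δ ∧ ∀ i : ℕ, i ≤ n → a + i * δ ∈ Gs n lam := by
  rintro ⟨a, δ, hδ, H⟩
  set M : ℝ := ((n : ℝ) - 1) / (1 - lam) with hM
  have hMpos : (0:ℝ) < 1 - lam := by linarith
  have hn2 : (2 : ℝ) ≤ (n : ℝ) := by exact_mod_cast hn
  have hMpos2 : 0 < M := by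
    rw [hM]; exact div_pos (by linarith) hMpos
  have hsmall : lam * M < 1 / 2 := by
    rw [hM, mul_div_assoc', div_lt_iff₀ hMpos]
    nlinarith [hsm]
  have key : ∀ k : ℕ, ∃ a' : ℝ, ∀ i : ℕ, i ≤ n → a' + i * (δ / lam ^ k) ∈ Gs n lam := by
    intro k
    induction k with
    | zero => exact ⟨a, fun i hi => by simpa using H i hi⟩
    | succ k ih =>
      obtain ⟨a', ha'⟩ := ih
      obtain ⟨a'', ha''⟩ := descend hn h0 h1 hnl hsmall (div_pos hδ (pow_pos h0 k)) ha'
      refine ⟨a'', fun i hi => ?_⟩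
      have := ha'' i hi
      rwa [div_div, ← pow_succ] at this
  have hlMpos : 0 < lam * M := mul_pos h0 hMpos2
  obtain ⟨k, hk⟩ := exists_pow_lt_of_lt_one (div_pos hδ hlMpos) h1
  obtain ⟨a', ha'⟩ := key k
  have hle := delta_le hn h0 h1 hnl (div_pos hδ (pow_pos h0 k)) ha'
  rw [div_le_iff₀ (pow_pos h0 k)] at hle
  rw [lt_div_iff₀ hlMpos] at hk
  nlinarith [hle, hk]

end Descent

section Final
variable {n : ℕ} {lam : ℝ}

lemma tsum_shift (a : ℕ → ℕ) :
    ∑' t : ℕ, (a t : ℝ) * lam ^ (t + 1) = lam * ∑' t : ℕ, (a t : ℝ) * lam ^ t := by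
  rw [← tsum_mul_left]
  exact tsum_congr fun t => by ring

lemma ap_scale {S T : Set ℝ} (K : ℝ) (hK : 0 < K) (P : ℕ → Prop)
    (hiff : ∀ x : ℝ, x ∈ T ↔ ∃ y ∈ S, x = K * y) :
    (∃ a δ : ℝ, 0 < δ ∧ ∀ i : ℕ, P i → a + i * δ ∈ T) ↔
      (∃ a δ : ℝ, 0 < δ ∧ ∀ i : ℕ, P i → a + i * δ ∈ S) := by
  constructor
  · rintro ⟨a, δ, hδ, H⟩
    refine ⟨a / K, δ / K, div_pos hδ hK, fun i hi => ?_⟩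
    obtain ⟨y, hy, hxy⟩ := (hiff _).1 (H i hi)
    have heq : a / K + i * (δ / K) = y := by
      field_simp
      linarith [hxy]
    rw [heq]; exact hy
  · rintro ⟨a, δ, hδ, H⟩
    refine ⟨K * a, K * δ, mul_pos hK hδ, fun i hi => ?_⟩
    exact (hiff _).2 ⟨a + i * δ, H i hi, by ring⟩

end Final

end APaux

/-- The maximal length of an arithmetic progression in `E_λ^n` equals `n`
(i.e. it contains an A.P. of length `n` but none of length `n + 1`) if and only if
`λ < 1/(2n - 1)`. -/
theorem max_ap_length_eq_n_iff (n : ℕ) (hn : 2 ≤ n)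
    (lam : ℝ) (hlam : lam ∈ Set.Ioo (0:ℝ) (1 / n)) :
    ((∃ a δ : ℝ, 0 < δ ∧ ∀ i : ℕ, i < n → a + i * δ ∈ selfSimilarSet n lam) ∧
      ¬ ∃ a δ : ℝ, 0 < δ ∧ ∀ i : ℕ, i ≤ n → a + i * δ ∈ selfSimilarSet n lam)
    ↔ lam < 1 / (2 * n - 1) := by
  obtain ⟨h0, h1n⟩ := hlam
  have hn2 : (2 : ℝ) ≤ (n : ℝ) := by exact_mod_cast hn
  have hnpos : (0 : ℝ) < (n : ℝ) := by linarith
  have hnl : (n : ℝ) * lam < 1 := by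
    rw [lt_div_iff₀ hnpos] at h1n
    linarith
  have h1 : lam < 1 := by nlinarith
  set K : ℝ := (lam + (1 - (n : ℝ) * lam) / ((n : ℝ) - 1)) * lam with hKdef
  have hK : 0 < K := by
    have h2 : 0 < 1 - (n : ℝ) * lam := by linarith
    have h3 : 0 < (n : ℝ) - 1 := by linarith
    have h4 : 0 < (1 - (n : ℝ) * lam) / ((n : ℝ) - 1) := div_pos h2 h3
    rw [hKdef]
    positivity
  have hmem : ∀ x : ℝ, x ∈ selfSimilarSet n lam ↔ ∃ y ∈ APaux.Gs n lam, x = K * y := by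
    intro x
    constructor
    · rintro ⟨a, ha, rfl⟩
      exact ⟨∑' t : ℕ, (a t : ℝ) * lam ^ t, ⟨a, ha, rfl⟩, by rw [APaux.tsum_shift]; ring⟩
    · rintro ⟨y, ⟨a, ha, rfl⟩, rfl⟩
      exact ⟨a, ha, by rw [APaux.tsum_shift]; ring⟩
  have h2n1 : (0 : ℝ) < 2 * (n : ℝ) - 1 := by linarith
  constructor
  · rintro ⟨_, hno⟩
    by_contra hge
    push_neg at hge
    have hbig : 1 ≤ (2 * (n : ℝ) - 1) * lam := by
      rw [div_le_iff₀ h2n1] at hge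
      linarith
    exact hno ((APaux.ap_scale K hK (fun i => i ≤ n) hmem).2 (APaux.ap_succ hn h0 h1 hbig))
  · intro hlt
    have hsm : (2 * (n : ℝ) - 1) * lam < 1 := by
      rw [lt_div_iff₀ h2n1] at hlt
      linarith
    constructor
    · refine (APaux.ap_scale K hK (fun i => i < n) hmem).2 ⟨0, 1, one_pos, fun i hi => ?_⟩
      simpa using APaux.nat_mem_Gs h0.le h1 hi
    · intro hex
      exact APaux.no_ap hn h0 h1 hnl hsm ((APaux.ap_scale K hK (fun i => i ≤ n) hmem).1 hex)
end

section
/- Let n ≥ 2 be an integer, λ ∈ (0, 1/n), α = (1 − nλ)/(n − 1), and let E_λ^n = { (λ+α)·∑_{t=1}^{∞} a_t λ^t : a_t ∈ {0,1,…,n−1} for all t ≥ 1 }. Then every arithmetic progression contained in E_λ^n has length at most ⌊1/α⌋ + 1 = ⌊(n−1)/(1−nλ)⌋ + 1. -/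
open Finset

section aux

variable {n : ℕ} {lam : ℝ}

lemma ssl_summable (hl0 : 0 < lam) (hl1 : lam < 1) {b : ℕ → ℕ} (hb : ∀ t, b t < n) :
    Summable (fun t => (b t : ℝ) * lam ^ (t + 1)) := by
  apply Summable.of_nonneg_of_le (fun t => by positivity) (fun t => ?_)
    (((summable_geometric_of_lt_one hl0.le hl1).mul_left ((n : ℝ) * lam)))
  have : (b t : ℝ) ≤ n := by exact_mod_cast (hb t).le
  calc (b t : ℝ) * lam ^ (t + 1) ≤ (n : ℝ) * lam ^ (t + 1) := by
        apply mul_le_mul_of_nonneg_right this (by positivity)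
    _ = (n : ℝ) * lam * lam ^ t := by ring

lemma ssl_tsum_nonneg (hl0 : 0 < lam) {b : ℕ → ℕ} :
    0 ≤ ∑' t, (b t : ℝ) * lam ^ (t + 1) :=
  tsum_nonneg fun t => by positivity

lemma ssl_tsum_le (hl0 : 0 < lam) (hl1 : lam < 1) {b : ℕ → ℕ} (hb : ∀ t, b t < n) :
    ∑' t, (b t : ℝ) * lam ^ (t + 1) ≤ ((n : ℝ) - 1) * lam / (1 - lam) := by
  have hsum2 : Summable (fun t : ℕ => ((n : ℝ) - 1) * lam * lam ^ t) :=
    (summable_geometric_of_lt_one hl0.le hl1).mul_left _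
  have h1 : ∑' t, (b t : ℝ) * lam ^ (t + 1) ≤ ∑' t : ℕ, ((n : ℝ) - 1) * lam * lam ^ t := by
    apply Summable.tsum_le_tsum (fun t => ?_) (ssl_summable hl0 hl1 hb) hsum2
    have hbt : (b t : ℝ) + 1 ≤ (n : ℝ) := by exact_mod_cast hb t
    calc (b t : ℝ) * lam ^ (t + 1) ≤ ((n : ℝ) - 1) * lam ^ (t + 1) := by
          apply mul_le_mul_of_nonneg_right (by linarith) (by positivity)
      _ = ((n : ℝ) - 1) * lam * lam ^ t := by ring
  calc ∑' t, (b t : ℝ) * lam ^ (t + 1) ≤ ∑' t : ℕ, ((n : ℝ) - 1) * lam * lam ^ t := h1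
    _ = ((n : ℝ) - 1) * lam * (1 - lam)⁻¹ := by
        rw [tsum_mul_left, tsum_geometric_of_lt_one hl0.le hl1]
    _ = ((n : ℝ) - 1) * lam / (1 - lam) := by ring

lemma ssl_shift (hl0 : 0 < lam) (hl1 : lam < 1) {b : ℕ → ℕ} (hb : ∀ t, b t < n) (m : ℕ) :
    ∑' t, (b t : ℝ) * lam ^ (t + 1)
      = (∑ t ∈ range m, (b t : ℝ) * lam ^ (t + 1))
        + lam ^ m * ∑' t, (b (t + m) : ℝ) * lam ^ (t + 1) := by
  rw [← Summable.sum_add_tsum_nat_add m (ssl_summable hl0 hl1 hb)]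
  congr 1
  rw [← tsum_mul_left]
  apply tsum_congr
  intro t
  ring

end aux

/-- Every arithmetic progression contained in `E_λ^n` has length at most
`⌊1/α⌋ + 1 = ⌊(n-1)/(1-nλ)⌋ + 1`, where `α = (1-nλ)/(n-1)`. -/
theorem ap_length_le_floor_inv_alpha (n : ℕ) (hn : 2 ≤ n)
    (lam : ℝ) (hlam : lam ∈ Set.Ioo (0:ℝ) (1 / n))
    (α : ℝ) (hα : α = (1 - n * lam) / (n - 1))
    (k : ℕ) (a δ : ℝ) (hδ : 0 < δ)
    (hAP : ∀ i : ℕ, i < k → a + i * δ ∈ selfSimilarSet n lam) :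
    k ≤ ⌊1 / α⌋₊ + 1 ∧ ⌊1 / α⌋₊ = ⌊((n:ℝ) - 1) / (1 - n * lam)⌋₊ := by
  classical
  obtain ⟨hl0, hlub⟩ := hlam
  have hn0 : (0:ℝ) < n := by positivity
  have hnl : (n:ℝ) * lam < 1 := by
    rw [lt_div_iff₀ hn0] at hlub; linarith [hlub]
  have hn2 : (2:ℝ) ≤ (n:ℝ) := by exact_mod_cast hn
  have hn1 : (1:ℝ) ≤ (n:ℝ) - 1 := by linarith
  have hn1' : (0:ℝ) < (n:ℝ) - 1 := by linarith
  have hl1 : lam < 1 := by nlinarith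
  have hα0 : 0 < α := by
    rw [hα]; apply div_pos <;> linarith
  have hfloor : 1 / α = ((n:ℝ) - 1) / (1 - n * lam) := by rw [hα, one_div_div]
  refine ⟨?_, by rw [hfloor]⟩
  -- trivial cases
  rcases Nat.lt_or_ge k 2 with hk2 | hk2
  · omega
  -- the scaling constant
  set c : ℝ := lam + (1 - n * lam) / (n - 1) with hc
  have hcval : c = (1 - lam) / ((n:ℝ) - 1) := by
    rw [hc]; field_simp; ring
  have hc0 : 0 < c := by
    rw [hcval]; apply div_pos <;> linarith
  have hcmax : c * (((n : ℝ) - 1) * lam / (1 - lam)) = lam := by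
    rw [hcval, div_mul_div_comm, div_eq_iff (by nlinarith : ((n:ℝ) - 1) * (1 - lam) ≠ 0)]
    ring
  have hcα : c - lam = α := by rw [hα, hc]; ring
  -- the digit sequences
  have hchoice : ∀ i : ℕ, ∃ b : ℕ → ℕ, (∀ t, b t < n) ∧
      (i < k → a + i * δ = c * ∑' t, (b t : ℝ) * lam ^ (t + 1)) := by
    intro i
    by_cases hi : i < k
    · obtain ⟨b, hb1, hb2⟩ := hAP i hi
      exact ⟨b, hb1, fun _ => hb2⟩
    · exact ⟨fun _ => 0, fun t => by show 0 < n; omega, fun h => absurd h hi⟩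
  choose A hAn hAx using hchoice
  -- bounds on (scaled) tails
  have htail0 : ∀ b : ℕ → ℕ, (∀ t, b t < n) →
      0 ≤ c * ∑' t, (b t : ℝ) * lam ^ (t + 1) :=
    fun b hb => mul_nonneg hc0.le (ssl_tsum_nonneg hl0)
  have htail1 : ∀ b : ℕ → ℕ, (∀ t, b t < n) →
      c * ∑' t, (b t : ℝ) * lam ^ (t + 1) ≤ lam := by
    intro b hb
    calc c * ∑' t, (b t : ℝ) * lam ^ (t + 1)
        ≤ c * (((n : ℝ) - 1) * lam / (1 - lam)) :=
          mul_le_mul_of_nonneg_left (ssl_tsum_le hl0 hl1 hb) hc0.le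
      _ = lam := hcmax
  -- existence of a position where digits differ
  have hex : ∃ t, ∃ i, ∃ j, i < k ∧ j < k ∧ A i t ≠ A j t := by
    by_contra h
    push_neg at h
    have heq : (∑' t, (A 0 t : ℝ) * lam ^ (t + 1)) = ∑' t, (A 1 t : ℝ) * lam ^ (t + 1) :=
      tsum_congr fun t => by rw [h t 0 1 (by omega) (by omega)]
    have h0 := hAx 0 (by omega)
    have h1 := hAx 1 (by omega)
    rw [heq] at h0
    rw [← h1] at h0
    push_cast at h0
    linarith
  obtain ⟨m, hmspec, hmmin⟩ : ∃ m : ℕ, (∃ i j, i < k ∧ j < k ∧ A i m ≠ A j m)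
      ∧ ∀ t, t < m → ¬∃ i j, i < k ∧ j < k ∧ A i t ≠ A j t :=
    ⟨Nat.find hex, Nat.find_spec hex, fun t ht => Nat.find_min hex ht⟩
  obtain ⟨i, j, hik, hjk, hijm⟩ := hmspec
  have hmin : ∀ t, t < m → ∀ p q : ℕ, p < k → q < k → A p t = A q t := by
    intro t ht p q hp hq
    by_contra hne
    exact hmmin t ht ⟨p, q, hp, hq, hne⟩
  obtain ⟨p, q, hpk, hqk, hpq⟩ : ∃ p q, p < k ∧ q < k ∧ A p m < A q m := by
    rcases Ne.lt_or_gt hijm with h | h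
    · exact ⟨i, j, hik, hjk, h⟩
    · exact ⟨j, i, hjk, hik, h⟩
  set d : ℕ := A p m with hd
  obtain ⟨Q, hQ⟩ : ∃ q : ℝ, q = c * ∑ t ∈ range m, (A p t : ℝ) * lam ^ (t + 1) :=
    ⟨_, rfl⟩
  have hpow : 0 < lam ^ (m + 1) := pow_pos hl0 _
  -- common prefix of all digit sequences
  have hpre : ∀ l, l < k → ∑ t ∈ range m, (A l t : ℝ) * lam ^ (t + 1)
      = ∑ t ∈ range m, (A p t : ℝ) * lam ^ (t + 1) :=
    fun l hl => Finset.sum_congr rfl fun t ht => by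
      rw [hmin t (Finset.mem_range.mp ht) l p hl hpk]
  -- decomposition at level m + 1
  have hdec : ∀ l, l < k → a + l * δ
      = Q + c * (A l m : ℝ) * lam ^ (m + 1)
        + lam ^ (m + 1) * (c * ∑' t, (A l (t + (m + 1)) : ℝ) * lam ^ (t + 1)) := by
    intro l hl
    rw [hAx l hl, ssl_shift hl0 hl1 (hAn l) (m + 1), sum_range_succ, hpre l hl, hQ]
    ring
  -- decomposition at level m
  have hdecm : ∀ l, l < k → a + l * δ
      = Q + lam ^ m * (c * ∑' t, (A l (t + m) : ℝ) * lam ^ (t + 1)) := by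
    intro l hl
    rw [hAx l hl, ssl_shift hl0 hl1 (hAn l) m, hpre l hl, hQ]
    ring
  -- the gap
  obtain ⟨u, hu⟩ : ∃ x : ℝ, x = Q + c * (d : ℝ) * lam ^ (m + 1) + lam ^ (m + 2) := ⟨_, rfl⟩
  obtain ⟨v, hv⟩ : ∃ x : ℝ, x = Q + c * ((d : ℝ) + 1) * lam ^ (m + 1) := ⟨_, rfl⟩
  have hgap : v - u = α * lam ^ (m + 1) := by rw [hu, hv, ← hcα]; ring
  have huv : u < v := by nlinarith [mul_pos hα0 hpow]
  -- dichotomy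
  have hdich : ∀ l, l < k → (A l m ≤ d → a + l * δ ≤ u) ∧ (d < A l m → v ≤ a + l * δ) := by
    intro l hl
    have hT0 : 0 ≤ c * ∑' t, (A l (t + (m + 1)) : ℝ) * lam ^ (t + 1) :=
      htail0 _ (fun t => hAn l _)
    have hT1 : c * ∑' t, (A l (t + (m + 1)) : ℝ) * lam ^ (t + 1) ≤ lam :=
      htail1 _ (fun t => hAn l _)
    have hx := hdec l hl
    constructor
    · intro hle
      have hle' : (A l m : ℝ) ≤ (d : ℝ) := by exact_mod_cast hle
      have h1 : c * (A l m : ℝ) * lam ^ (m + 1) ≤ c * (d : ℝ) * lam ^ (m + 1) :=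
        mul_le_mul_of_nonneg_right (mul_le_mul_of_nonneg_left hle' hc0.le)
          (pow_nonneg hl0.le _)
      have h2 : lam ^ (m + 1) * (c * ∑' t, (A l (t + (m + 1)) : ℝ) * lam ^ (t + 1))
          ≤ lam ^ (m + 2) := by
        calc lam ^ (m + 1) * (c * ∑' t, (A l (t + (m + 1)) : ℝ) * lam ^ (t + 1))
            ≤ lam ^ (m + 1) * lam := mul_le_mul_of_nonneg_left hT1 (pow_nonneg hl0.le _)
          _ = lam ^ (m + 2) := by ring
      rw [hu]; linarith
    · intro hgt
      have hge' : (d : ℝ) + 1 ≤ (A l m : ℝ) := by exact_mod_cast hgt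
      have h1 : c * ((d : ℝ) + 1) * lam ^ (m + 1) ≤ c * (A l m : ℝ) * lam ^ (m + 1) :=
        mul_le_mul_of_nonneg_right (mul_le_mul_of_nonneg_left hge' hc0.le)
          (pow_nonneg hl0.le _)
      have h2 : 0 ≤ lam ^ (m + 1) * (c * ∑' t, (A l (t + (m + 1)) : ℝ) * lam ^ (t + 1)) :=
        mul_nonneg (pow_nonneg hl0.le _) hT0
      rw [hv]; linarith
  have hxp : a + p * δ ≤ u := (hdich p hpk).1 le_rfl
  have hxq : v ≤ a + q * δ := (hdich q hqk).2 hpq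
  -- the least index at or beyond the gap
  have hexL : ∃ l, l < k ∧ v ≤ a + l * δ := ⟨q, hqk, hxq⟩
  obtain ⟨L, ⟨hLk, hLv⟩, hLmin⟩ : ∃ L : ℕ, (L < k ∧ v ≤ a + L * δ)
      ∧ ∀ l, l < L → ¬(l < k ∧ v ≤ a + l * δ) :=
    ⟨Nat.find hexL, Nat.find_spec hexL, fun l hl => Nat.find_min hexL hl⟩
  have hLpos : 0 < L := by
    rcases Nat.eq_zero_or_pos L with h0 | h; swap
    · exact h
    exfalso
    rw [h0] at hLv
    have hp0 : (0 : ℝ) ≤ (p : ℝ) * δ := by positivity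
    push_cast at hLv
    linarith
  have hLk' : L - 1 < k := by omega
  have hprev : ¬(L - 1 < k ∧ v ≤ a + ((L - 1 : ℕ) : ℝ) * δ) := hLmin (L - 1) (by omega)
  push_neg at hprev
  have hvlt : a + ((L - 1 : ℕ) : ℝ) * δ < v := hprev hLk'
  have hprevu : a + ((L - 1 : ℕ) : ℝ) * δ ≤ u := by
    rcases le_or_gt (A (L - 1) m) d with h | h
    · exact (hdich _ hLk').1 h
    · exact absurd ((hdich _ hLk').2 h) (not_le.mpr hvlt)
  -- δ is at least the gap
  have hcast : ((L - 1 : ℕ) : ℝ) = (L : ℝ) - 1 := by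
    rw [Nat.cast_sub (by omega : 1 ≤ L)]; norm_num
  have hdel : α * lam ^ (m + 1) ≤ δ := by
    rw [hcast] at hprevu
    linarith [hLv, hprevu, hgap]
  -- diameter bound
  have hT0' : ∀ l, l < k → 0 ≤ c * ∑' t, (A l (t + m) : ℝ) * lam ^ (t + 1) :=
    fun l _ => htail0 _ (fun t => hAn l _)
  have hT1' : ∀ l, l < k → c * ∑' t, (A l (t + m) : ℝ) * lam ^ (t + 1) ≤ lam :=
    fun l _ => htail1 _ (fun t => hAn l _)
  have hdiam : ((k - 1 : ℕ) : ℝ) * δ ≤ lam ^ (m + 1) := by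
    obtain ⟨T0, hT0e⟩ : ∃ x : ℝ, x = c * ∑' t, (A 0 (t + m) : ℝ) * lam ^ (t + 1) := ⟨_, rfl⟩
    obtain ⟨T1, hT1e⟩ : ∃ x : ℝ, x = c * ∑' t, (A (k - 1) (t + m) : ℝ) * lam ^ (t + 1) :=
      ⟨_, rfl⟩
    have h1 : a + ((0 : ℕ) : ℝ) * δ = Q + lam ^ m * T0 := by
      rw [hT0e]; exact hdecm 0 (by omega)
    have h2 : a + ((k - 1 : ℕ) : ℝ) * δ = Q + lam ^ m * T1 := by
      rw [hT1e]; exact hdecm (k - 1) (by omega)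
    have h3 : 0 ≤ T0 := by rw [hT0e]; exact hT0' 0 (by omega)
    have h4 : T1 ≤ lam := by rw [hT1e]; exact hT1' (k - 1) (by omega)
    have hpm : 0 < lam ^ m := pow_pos hl0 _
    have h5 : lam ^ m * T1 - lam ^ m * T0 ≤ lam ^ m * lam := by
      have h45 : T1 - T0 ≤ lam := by linarith
      calc lam ^ m * T1 - lam ^ m * T0 = lam ^ m * (T1 - T0) := by ring
        _ ≤ lam ^ m * lam := mul_le_mul_of_nonneg_left h45 hpm.le
    have h6 : lam ^ m * lam = lam ^ (m + 1) := by ring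
    push_cast at h1
    linarith [h1, h2, h5]
  -- conclude
  have hkcast : ((k - 1 : ℕ) : ℝ) = (k : ℝ) - 1 := by
    rw [Nat.cast_sub (by omega : 1 ≤ k)]; norm_num
  have hk1 : ((k : ℝ) - 1) * (α * lam ^ (m + 1)) ≤ ((k : ℝ) - 1) * δ := by
    apply mul_le_mul_of_nonneg_left hdel
    have : (2 : ℝ) ≤ (k : ℝ) := by exact_mod_cast hk2
    linarith
  rw [hkcast] at hdiam
  have h7 : (((k : ℝ) - 1) * α) * lam ^ (m + 1) ≤ 1 * lam ^ (m + 1) := by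
    calc (((k : ℝ) - 1) * α) * lam ^ (m + 1) = ((k : ℝ) - 1) * (α * lam ^ (m + 1)) := by ring
      _ ≤ ((k : ℝ) - 1) * δ := hk1
      _ ≤ lam ^ (m + 1) := hdiam
      _ = 1 * lam ^ (m + 1) := by ring
  have hfin : ((k : ℝ) - 1) * α ≤ 1 := le_of_mul_le_mul_right h7 hpow
  have hfin2 : ((k - 1 : ℕ) : ℝ) ≤ 1 / α := by
    rw [hkcast, le_div_iff₀ hα0]
    linarith
  have := Nat.le_floor hfin2
  omega
end

section
/- Let n ≥ 2 be an integer and let λ satisfy 1/(2n−1) ≤ λ < 1/n. Let k = ⌊1/λ⌋ and let β = k/2 if k is even and β = (k+1)/2 if k is odd. Then there exists a sequence of integers {d_t}_{t=3}^{∞} with d_t ∈ {−(n−1), …, −1, 0, 1, …, n−1} such that 2βλ² − λ = ∑_{t=3}^{∞} (2 d_t) λ^t. -/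
/-- Greedy digit for remainder `r`. -/
noncomputable def gdigit (n : ℕ) (r : ℝ) : ℤ :=
  if (2*(n:ℝ)-2) < r then (n:ℤ)-1 else if r < -(2*(n:ℝ)-2) then -((n:ℤ)-1) else round (r/2)

/-- Greedy remainders. -/
noncomputable def grem (n : ℕ) (lam x : ℝ) : ℕ → ℝ
  | 0 => x / lam^3
  | t+1 => (grem n lam x t - 2 * gdigit n (grem n lam x t)) / lam

lemma gdigit_bound (n : ℕ) (hn : 2 ≤ n) (r : ℝ) : |gdigit n r| ≤ (n:ℤ) - 1 := by
  unfold gdigit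
  split_ifs with h1 h2
  · rw [abs_of_nonneg (by omega)]
  · rw [abs_of_nonpos (by omega)]; omega
  · push_neg at h1 h2
    have hr : |r/2| ≤ (n:ℝ) - 1 := by
      rw [abs_div, abs_of_pos (by norm_num : (0:ℝ) < 2), div_le_iff₀ (by norm_num)]
      rw [abs_le]; constructor <;> nlinarith
    have h3 : |r/2 - (round (r/2) : ℝ)| ≤ 1/2 := abs_sub_round (r/2)
    have h3' : |(round (r/2) : ℝ) - r/2| ≤ 1/2 := by rwa [abs_sub_comm] at h3
    have h4 : |(round (r/2) : ℝ)| ≤ (n:ℝ) - 1 + 1/2 := by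
      calc |(round (r/2) : ℝ)| ≤ |(round (r/2) : ℝ) - r/2| + |r/2| := by
            have := abs_add_le ((round (r/2) : ℝ) - r/2) (r/2); simpa using this
        _ ≤ (n:ℝ) - 1 + 1/2 := by linarith
    have h5 : |((round (r/2) : ℤ) : ℝ)| < (n:ℝ) := by push_cast; linarith
    rw [← Int.cast_abs] at h5
    have h6 : |round (r/2)| < (n:ℤ) := by exact_mod_cast h5
    omega

/-- Step estimate: remainder stays in `[-M, M]` with `M = 2(n-1)/(1-λ)`. -/
lemma gdigit_step (n : ℕ) (hn : 2 ≤ n) (lam : ℝ) (hl0 : 0 < lam) (hl1 : lam < 1)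
    (hl2 : 1 ≤ (2*(n:ℝ)-1) * lam) (r : ℝ)
    (hr : |r| ≤ 2*((n:ℝ)-1)/(1-lam)) :
    |r - 2 * gdigit n r| ≤ lam * (2*((n:ℝ)-1)/(1-lam)) := by
  set M : ℝ := 2*((n:ℝ)-1)/(1-lam) with hM
  have h1l : (0:ℝ) < 1 - lam := by linarith
  have hMeq : M * (1 - lam) = 2*((n:ℝ)-1) := by
    rw [hM, div_mul_cancel₀]; exact ne_of_gt h1l
  have hlM : 1 ≤ lam * M := by
    have : 2*((n:ℝ)-1) * lam ≥ 1 - lam := by nlinarith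
    have hM' : M = 2*((n:ℝ)-1)/(1-lam) := hM
    rw [ge_iff_le, ← sub_nonneg] at this
    have : (1:ℝ) ≤ 2*((n:ℝ)-1) * lam / (1-lam) := by
      rw [le_div_iff₀ h1l]; nlinarith
    calc (1:ℝ) ≤ 2*((n:ℝ)-1) * lam / (1-lam) := this
      _ = lam * M := by rw [hM]; ring
  unfold gdigit
  rw [abs_le] at hr
  split_ifs with h1 h2
  · push_cast
    have : M - 2*((n:ℝ)-1) = lam * M := by nlinarith
    rw [abs_le]; constructor <;> nlinarith
  · push_cast
    have : M - 2*((n:ℝ)-1) = lam * M := by nlinarith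
    rw [abs_le]; constructor <;> nlinarith
  · push_neg at h1 h2
    have h3 : |r/2 - (round (r/2) : ℝ)| ≤ 1/2 := abs_sub_round (r/2)
    have h3' : |(round (r/2) : ℝ) - r/2| ≤ 1/2 := by rwa [abs_sub_comm] at h3
    have : |r - 2 * (round (r/2) : ℝ)| ≤ 1 := by
      have : r - 2 * (round (r/2) : ℝ) = -2 * ((round (r/2) : ℝ) - r/2) := by ring
      rw [this, abs_mul]
      calc |(-2:ℝ)| * |(round (r/2) : ℝ) - r/2| ≤ 2 * (1/2) := by
            rw [abs_neg, abs_two]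
            exact mul_le_mul_of_nonneg_left h3' (by norm_num)
        _ = 1 := by norm_num
    calc |r - 2 * ((round (r/2) : ℤ) : ℝ)| ≤ 1 := by exact_mod_cast this
      _ ≤ lam * M := hlM

set_option maxHeartbeats 1000000 in
/-- For `1/(2n-1) ≤ λ < 1/n`, with `k = ⌊1/λ⌋` and `β = k/2` (`k` even) or
`β = (k+1)/2` (`k` odd), there is a sequence of integer digits `d_t ∈ {-(n-1), …, n-1}`
with `2βλ² - λ = ∑_{t≥3} (2 d_t) λ^t`. -/
theorem expansion_of_two_beta (n : ℕ) (hn : 2 ≤ n) (lam : ℝ)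
    (h1 : 1 / (2 * n - 1) ≤ lam) (h2 : lam < 1 / n)
    (k : ℕ) (hk : k = ⌊1 / lam⌋₊)
    (β : ℕ) (hβ : β = if Even k then k / 2 else (k + 1) / 2) :
    ∃ d : ℕ → ℤ, (∀ t : ℕ, |d t| ≤ (n:ℤ) - 1) ∧
      2 * β * lam ^ 2 - lam = ∑' t : ℕ, (2 * (d t) : ℝ) * lam ^ (t + 3) := by
  have hn1 : (1:ℝ) ≤ (n:ℝ) - 1 := by
    have : (2:ℝ) ≤ (n:ℝ) := by exact_mod_cast hn
    linarith
  have h2n1 : (0:ℝ) < 2*(n:ℝ) - 1 := by linarith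
  have hl0 : 0 < lam := lt_of_lt_of_le (by positivity) h1
  have hl2 : 1 ≤ (2*(n:ℝ)-1) * lam := by
    rw [div_le_iff₀ h2n1] at h1; linarith [h1]
  have hln : (n:ℝ) * lam < 1 := by
    rw [lt_div_iff₀ (by linarith : (0:ℝ) < (n:ℝ))] at h2; linarith
  have hl1 : lam < 1 := by nlinarith
  have h1l : (0:ℝ) < 1 - lam := by linarith
  set M : ℝ := 2*((n:ℝ)-1)/(1-lam) with hM
  set x : ℝ := 2 * β * lam ^ 2 - lam with hx
  -- bound on |2βλ - 1|
  have hkle : (k:ℝ) * lam ≤ 1 := by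
    have h0 : (0:ℝ) ≤ 1 / lam := by positivity
    have := Nat.floor_le h0
    rw [← hk] at this
    calc (k:ℝ) * lam ≤ (1/lam) * lam := by nlinarith
      _ = 1 := by field_simp
  have hklt : 1 < ((k:ℝ) + 1) * lam := by
    have := Nat.lt_succ_floor ⌊1/lam⌋₊
    have h' : (1:ℝ)/lam < (⌊1/lam⌋₊ : ℝ) + 1 := by
      have := Nat.lt_floor_add_one (1/lam)
      exact this
    rw [← hk] at h'
    calc (1:ℝ) = (1/lam) * lam := by field_simp
      _ < ((k:ℝ)+1) * lam := by nlinarith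
  have h2β : |2 * (β:ℝ) * lam - 1| ≤ lam := by
    rw [hβ]
    rcases Nat.even_or_odd k with he | ho
    · rw [if_pos he]
      obtain ⟨m, hm⟩ := he
      have : k / 2 = m := by omega
      rw [this]
      have hmk : (2:ℝ) * m = (k:ℝ) := by push_cast; rw [hm]; push_cast; ring
      rw [abs_le]
      constructor
      · nlinarith
      · nlinarith
    · rw [if_neg (Nat.not_even_iff_odd.mpr ho)]
      obtain ⟨m, hm⟩ := ho
      have : (k+1)/2 = m+1 := by omega
      rw [this]
      have hmk : (2:ℝ) * ((m:ℝ)+1) = (k:ℝ) + 1 := by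
        have : (k:ℝ) = 2*m+1 := by exact_mod_cast congrArg (Nat.cast (R:=ℝ)) hm
        push_cast; rw [this]; ring
      rw [abs_le]
      constructor
      · push_cast; nlinarith
      · push_cast; nlinarith
  -- initial remainder bound
  have hxval : |x| ≤ lam^2 := by
    have : x = lam * (2 * β * lam - 1) := by rw [hx]; ring
    rw [this, abs_mul, abs_of_pos hl0]
    calc lam * |2 * (β:ℝ) * lam - 1| ≤ lam * lam := by nlinarith [abs_nonneg (2*(β:ℝ)*lam-1)]
      _ = lam^2 := by ring
  have hMpos : 0 < M := by positivity
  have h2n1M : 2*(n:ℝ)-1 ≤ M := by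
    rw [hM, le_div_iff₀ h1l]
    calc (2*(n:ℝ)-1)*(1-lam) = (2*(n:ℝ)-1) - (2*(n:ℝ)-1)*lam := by ring
      _ ≤ 2*((n:ℝ)-1) := by linarith
  have hr0 : |grem n lam x 0| ≤ M := by
    show |x / lam^3| ≤ M
    rw [abs_div, abs_of_pos (by positivity : (0:ℝ) < lam^3), div_le_iff₀ (by positivity)]
    calc |x| ≤ lam^2 := hxval
      _ ≤ (2*(n:ℝ)-1) * lam * lam^2 := by
            nlinarith [mul_le_mul_of_nonneg_right hl2 (sq_nonneg lam)]
      _ ≤ M * lam^3 := by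
            nlinarith [mul_le_mul_of_nonneg_right h2n1M (pow_nonneg hl0.le 3),
              mul_le_mul_of_nonneg_right h2n1M (mul_nonneg hl0.le (sq_nonneg lam))]
  -- invariant
  have hrem : ∀ t, |grem n lam x t| ≤ M := by
    intro t
    induction t with
    | zero => exact hr0
    | succ t ih =>
      show |(grem n lam x t - 2 * gdigit n (grem n lam x t)) / lam| ≤ M
      rw [abs_div, abs_of_pos hl0, div_le_iff₀ hl0]
      have := gdigit_step n hn lam hl0 hl1 hl2 _ ih
      calc |grem n lam x t - 2 * (gdigit n (grem n lam x t) : ℝ)| ≤ lam * M := this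
        _ = M * lam := by ring
  set D : ℕ → ℤ := fun t => gdigit n (grem n lam x t) with hD
  refine ⟨D, fun t => gdigit_bound n hn _, ?_⟩
  -- partial sums
  have hpart : ∀ T, ∑ t ∈ Finset.range T, (2 * (D t) : ℝ) * lam ^ (t+3)
      = x - lam ^ (T+3) * grem n lam x T := by
    intro T
    induction T with
    | zero =>
      simp [grem]
      field_simp
      ring
    | succ T ih =>
      rw [Finset.sum_range_succ, ih]
      have hnext : grem n lam x (T+1) = (grem n lam x T - 2 * D T) / lam := rfl
      rw [hnext]
      have : lam ^ (T+1+3) * ((grem n lam x T - 2 * D T) / lam)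
          = lam ^ (T+3) * (grem n lam x T - 2 * D T) := by
        field_simp; ring
      rw [this]; ring
  -- summability
  have hsum : Summable (fun t : ℕ => (2 * (D t) : ℝ) * lam ^ (t+3)) := by
    apply Summable.of_abs
    refine Summable.of_nonneg_of_le (fun t => abs_nonneg _) (fun t => ?_)
      ((summable_geometric_of_lt_one hl0.le hl1).mul_left (2*((n:ℝ)-1) * lam^3))
    rw [abs_mul, abs_pow, abs_of_pos hl0]
    have hd := gdigit_bound n hn (grem n lam x t)
    have : |(2 * (D t) : ℝ)| ≤ 2*((n:ℝ)-1) := by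
      rw [abs_mul, abs_two]
      have : |(D t : ℝ)| ≤ (n:ℝ) - 1 := by
        rw [← Int.cast_abs]
        exact_mod_cast hd
      linarith
    calc |(2 * (D t) : ℝ)| * lam ^ (t+3) ≤ (2*((n:ℝ)-1)) * lam ^ (t+3) := by
          apply mul_le_mul_of_nonneg_right this (by positivity)
      _ = (2*((n:ℝ)-1) * lam^3) * lam ^ t := by ring
  -- limit
  have hlim : Filter.Tendsto (fun T => ∑ t ∈ Finset.range T, (2 * (D t) : ℝ) * lam ^ (t+3))
      Filter.atTop (nhds x) := by
    simp_rw [hpart]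
    have hbd : ∀ T : ℕ, ‖lam ^ (T+3) * grem n lam x T‖ ≤ M * lam^3 * lam ^ T := by
      intro T
      rw [norm_mul, norm_pow, Real.norm_eq_abs, abs_of_pos hl0, Real.norm_eq_abs]
      calc lam ^ (T+3) * |grem n lam x T| ≤ lam ^ (T+3) * M := by
            apply mul_le_mul_of_nonneg_left (hrem T) (by positivity)
        _ = M * lam^3 * lam ^ T := by ring
    have htd : Filter.Tendsto (fun T : ℕ => M * lam^3 * lam ^ T) Filter.atTop (nhds 0) := by
      have := (tendsto_pow_atTop_nhds_zero_of_lt_one hl0.le hl1).const_mul (M * lam^3)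
      simpa using this
    have h0 : Filter.Tendsto (fun T : ℕ => lam ^ (T+3) * grem n lam x T) Filter.atTop (nhds 0) :=
      squeeze_zero_norm hbd htd
    have := Filter.Tendsto.sub (tendsto_const_nhds (x := x)) h0
    simpa using this
  have := hsum.hasSum.tendsto_sum_nat
  exact tendsto_nhds_unique hlim this
end

section
/- Let n ≥ 2 be an integer and let λ satisfy 1/(2n−1) ≤ λ < 1/n. Let k = ⌊1/λ⌋ and let β = k/2 if k is even and β = (k+1)/2 if k is odd. Then |2βλ² − λ| ≤ 2(n−1)λ³/(1−λ). -/
/-- For `1/(2n-1) ≤ λ < 1/n`, with `k = ⌊1/λ⌋` and `β = k/2` (`k` even) or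
`β = (k+1)/2` (`k` odd), one has `|2βλ² - λ| ≤ 2(n-1)λ³/(1-λ)`. -/
theorem abs_two_beta_bound (n : ℕ) (hn : 2 ≤ n) (lam : ℝ)
    (h1 : 1 / (2 * n - 1) ≤ lam) (h2 : lam < 1 / n)
    (k : ℕ) (hk : k = ⌊1 / lam⌋₊)
    (β : ℕ) (hβ : β = if Even k then k / 2 else (k + 1) / 2) :
    |2 * β * lam ^ 2 - lam| ≤ 2 * ((n:ℝ) - 1) * lam ^ 3 / (1 - lam) := by
  have hn2 : (2:ℝ) ≤ n := by exact_mod_cast hn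
  have hden : (0:ℝ) < 2 * n - 1 := by linarith
  have hlam0 : 0 < lam := lt_of_lt_of_le (div_pos one_pos hden) h1
  have hn0 : (0:ℝ) < n := by linarith
  have hlam1 : lam < 1 := by
    have : (1:ℝ)/n ≤ 1/2 := by
      apply div_le_div_of_nonneg_left one_pos.le (by norm_num) hn2
    linarith
  have h2n : 1 ≤ lam * (2 * n - 1) := (div_le_iff₀ hden).mp h1
  have hfl : (k:ℝ) ≤ 1 / lam := by
    rw [hk]; exact Nat.floor_le (by positivity)
  have hfl2 : 1 / lam < (k:ℝ) + 1 := by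
    rw [hk]; exact Nat.lt_floor_add_one _
  have hkl : (k:ℝ) * lam ≤ 1 := (le_div_iff₀ hlam0).mp hfl
  have hkl2 : 1 < ((k:ℝ) + 1) * lam := (div_lt_iff₀ hlam0).mp hfl2
  have key : |2 * (β:ℝ) * lam ^ 2 - lam| ≤ lam ^ 2 := by
    rw [abs_le]
    by_cases hev : Even k
    · obtain ⟨m, hm⟩ := hev
      have hβ' : (2 * β : ℝ) = k := by
        rw [hβ, if_pos ⟨m, hm⟩]
        have h2 : 2 * (k / 2) = k := by omega
        exact_mod_cast congrArg (Nat.cast : ℕ → ℝ) h2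
      constructor <;> nlinarith
    · have hβ' : (2 * β : ℝ) = (k:ℝ) + 1 := by
        rw [hβ, if_neg hev]
        have hodd : k % 2 = 1 := Nat.odd_iff.mp (Nat.not_even_iff_odd.mp hev)
        have h2 : 2 * ((k + 1) / 2) = k + 1 := by omega
        have := congrArg (Nat.cast : ℕ → ℝ) h2
        push_cast at this
        linarith [this]
      constructor <;> nlinarith
  refine key.trans ?_
  rw [le_div_iff₀ (by linarith)]
  nlinarith [sq_nonneg lam, mul_pos hlam0 hlam0]
end
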